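/- arXiv:math/0304227 — 6 statements merged into one kernel-verified Lean document; each statement's English description precedes it below -/
import Mathlib

section
/- If λ ∈ ℝ then the values j_m(r,λ) and j_m'(r,λ) are real for all r > 0; moreover if λ ≤ 0 then j_m(r,λ) ≥ r^{|m|+1/2} and j_m'(r,λ) > 0 for all r > 0. -/
open Filter Set MeasureTheory intervalIntegral

namespace Stmt6Aux

/-- Wronskian of `w` with `r ^ μ`. -/
noncomputable def Wr (μ : ℝ) (w : ℝ → ℝ) (r : ℝ) : ℝ :=
  deriv w r * r ^ μ - w r * (μ * r ^ (μ - 1))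

variable {E : Type*} [NormedAddCommGroup E] [NormedSpace ℝ E]
variable {μ Q : ℝ} {c w : ℝ → ℝ}

lemma hasDerivAt_w' {w : ℝ → E} (hw : ContDiffOn ℝ 2 w (Ioi 0)) {s : ℝ} (hs : 0 < s) :
    HasDerivAt w (deriv w s) s :=
  ((hw.differentiableOn (by norm_num)).differentiableAt (Ioi_mem_nhds hs)).hasDerivAt

lemma hasDerivAt_dw' {w : ℝ → E} (hw : ContDiffOn ℝ 2 w (Ioi 0)) {s : ℝ} (hs : 0 < s) :
    HasDerivAt (deriv w) (deriv (deriv w) s) s := by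
  have h1 : ContDiffOn ℝ 1 (deriv w) (Ioi 0) :=
    hw.deriv_of_isOpen isOpen_Ioi (by norm_num)
  exact ((h1.differentiableOn (by norm_num)).differentiableAt (Ioi_mem_nhds hs)).hasDerivAt

lemma deriv_comp_re {f : ℝ → ℂ} {r : ℝ} (hf : DifferentiableAt ℝ f r) :
    deriv (fun s => (f s).re) r = (deriv f r).re :=
  (Complex.reCLM.hasFDerivAt.comp_hasDerivAt r hf.hasDerivAt).deriv

lemma deriv_comp_im {f : ℝ → ℂ} {r : ℝ} (hf : DifferentiableAt ℝ f r) :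
    deriv (fun s => (f s).im) r = (deriv f r).im :=
  (Complex.imCLM.hasFDerivAt.comp_hasDerivAt r hf.hasDerivAt).deriv

lemma hasDerivAt_Wr (hw : ContDiffOn ℝ 2 w (Ioi 0))
    (hode : ∀ r ∈ Ioi (0:ℝ), deriv (deriv w) r = (c r + (μ ^ 2 - μ) / r ^ 2) * w r)
    {s : ℝ} (hs : 0 < s) :
    HasDerivAt (Wr μ w) (c s * w s * s ^ μ) s := by
  have hφ : HasDerivAt (fun r : ℝ => r ^ μ) (μ * s ^ (μ - 1)) s :=
    Real.hasDerivAt_rpow_const (Or.inl hs.ne')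
  have hφ' : HasDerivAt (fun r : ℝ => μ * r ^ (μ - 1)) (μ * ((μ - 1) * s ^ (μ - 1 - 1))) s :=
    (Real.hasDerivAt_rpow_const (Or.inl hs.ne')).const_mul μ
  have h := ((hasDerivAt_dw' hw hs).mul hφ).sub ((hasDerivAt_w' hw hs).mul hφ')
  have hval : deriv (deriv w) s * s ^ μ + deriv w s * (μ * s ^ (μ - 1)) -
      (deriv w s * (μ * s ^ (μ - 1)) + w s * (μ * ((μ - 1) * s ^ (μ - 1 - 1))))
      = c s * w s * s ^ μ := by
    rw [hode s hs]
    have h1 : s ^ (μ - 1 - 1) = s ^ μ / s ^ 2 := by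
      rw [show μ - 1 - 1 = μ - 2 by ring, Real.rpow_sub hs]
      norm_num [Real.rpow_natCast s 2]
    rw [h1]
    have h2 : (s:ℝ) ^ (2:ℕ) ≠ 0 := by positivity
    field_simp
    ring
  rw [← hval]
  exact h

lemma hasDerivAt_h (hw : ContDiffOn ℝ 2 w (Ioi 0)) {s : ℝ} (hs : 0 < s) :
    HasDerivAt (fun t => w t / t ^ μ) (Wr μ w s / s ^ (2 * μ)) s := by
  have hφ : HasDerivAt (fun r : ℝ => r ^ μ) (μ * s ^ (μ - 1)) s :=
    Real.hasDerivAt_rpow_const (Or.inl hs.ne')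
  have hsμ : (0:ℝ) < s ^ μ := Real.rpow_pos_of_pos hs μ
  have h : HasDerivAt (fun t => w t / t ^ μ)
      ((deriv w s * s ^ μ - w s * (μ * s ^ (μ - 1))) / (s ^ μ) ^ 2) s :=
    (hasDerivAt_w' hw hs).div hφ hsμ.ne'
  convert h using 1
  rw [Wr, show (2:ℝ) * μ = μ + μ by ring, Real.rpow_add hs]
  ring

lemma contOn_rpow : ContinuousOn (fun s : ℝ => s ^ μ) (Ioi 0) := fun s hs =>
  (Real.continuousAt_rpow_const s μ (Or.inl (ne_of_gt hs))).continuousWithinAt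

lemma integrableOn_F (hμ : 1/2 ≤ μ) (hc : Measurable c) (hQ : ∀ s ∈ Ioi (0:ℝ), |c s| ≤ Q)
    (hw : ContDiffOn ℝ 2 w (Ioi 0)) {ε t : ℝ} (hε : 0 < ε) (hεt : ε ≤ t) :
    IntervalIntegrable (fun s => c s * w s * s ^ μ) volume ε t := by
  have hμ0 : (0:ℝ) ≤ μ := le_trans (by norm_num) hμ
  have hsub : Icc ε t ⊆ Ioi (0:ℝ) := fun x hx => lt_of_lt_of_le hε hx.1
  have hsub' : Ioc ε t ⊆ Icc ε t := Ioc_subset_Icc_self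
  obtain ⟨M, hM⟩ := (isCompact_Icc.image_of_continuousOn
    (hw.continuousOn.mono hsub)).isBounded.subset_closedBall 0
  have hwM : ∀ x ∈ Icc ε t, |w x| ≤ M := by
    intro x hx
    simpa [Real.dist_eq] using hM (mem_image_of_mem w hx)
  rw [intervalIntegrable_iff_integrableOn_Ioc_of_le hεt]
  have hmeas : AEStronglyMeasurable (fun s => c s * w s * s ^ μ)
      (volume.restrict (Ioc ε t)) := by
    apply AEStronglyMeasurable.mul
    apply AEStronglyMeasurable.mul
    · exact (hc.aestronglyMeasurable).restrict
    · exact ((hw.continuousOn.mono (hsub'.trans hsub)).aestronglyMeasurable measurableSet_Ioc)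
    · exact ((contOn_rpow.mono (hsub'.trans hsub)).aestronglyMeasurable measurableSet_Ioc)
  apply Integrable.mono' (g := fun _ => Q * M * t ^ μ)
    (integrableOn_const measure_Ioc_lt_top.ne enorm_ne_top) hmeas
  filter_upwards [ae_restrict_mem measurableSet_Ioc] with x hx
  have hx' : x ∈ Icc ε t := hsub' hx
  have hx0 : 0 < x := hsub hx'
  have h1 : |c x| ≤ Q := hQ x hx0
  have h2 : |w x| ≤ M := hwM x hx'
  have h3 : x ^ μ ≤ t ^ μ := Real.rpow_le_rpow hx0.le hx'.2 hμ0
  have h4 : (0:ℝ) ≤ x ^ μ := (Real.rpow_pos_of_pos hx0 μ).le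
  have : ‖c x * w x * x ^ μ‖ = |c x| * |w x| * x ^ μ := by
    rw [Real.norm_eq_abs, abs_mul, abs_mul, abs_of_nonneg h4]
  rw [this]
  have hQ0 : 0 ≤ Q := le_trans (abs_nonneg _) h1
  have hM0 : 0 ≤ M := le_trans (abs_nonneg _) h2
  exact mul_le_mul (mul_le_mul h1 h2 (abs_nonneg _) hQ0) h3 h4 (by positivity)

lemma Wr_tendsto (hμ : 1/2 ≤ μ) {A : ℝ}
    (h0 : Tendsto (fun r => w r / r ^ μ) (nhdsWithin 0 (Ioi 0)) (nhds A))
    (h0' : Tendsto (fun r => deriv w r / (μ * r ^ (μ - 1))) (nhdsWithin 0 (Ioi 0)) (nhds A)) :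
    Tendsto (Wr μ w) (nhdsWithin 0 (Ioi 0)) (nhds 0) := by
  have hμ0 : (0:ℝ) < μ := lt_of_lt_of_le (by norm_num) hμ
  have key : ∀ r ∈ Ioi (0:ℝ),
      Wr μ w r = (deriv w r / (μ * r ^ (μ - 1)) - w r / r ^ μ) * (μ * r ^ (2*μ - 1)) := by
    intro r hr
    have hr0 : (0:ℝ) < r := hr
    have ha : (0:ℝ) < r ^ μ := Real.rpow_pos_of_pos hr0 μ
    have hb : (0:ℝ) < r ^ (μ - 1) := Real.rpow_pos_of_pos hr0 _
    have hab : r ^ (2*μ - 1) = r ^ μ * r ^ (μ - 1) := by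
      rw [← Real.rpow_add hr0]; ring_nf
    rw [Wr, hab]
    field_simp
  have h1 : Tendsto (fun r => deriv w r / (μ * r ^ (μ - 1)) - w r / r ^ μ)
      (nhdsWithin 0 (Ioi 0)) (nhds 0) := by
    have := h0'.sub h0
    simpa using this
  have h2 : Tendsto (fun r : ℝ => (deriv w r / (μ * r ^ (μ - 1)) - w r / r ^ μ) * (μ * r ^ (2*μ - 1)))
      (nhdsWithin 0 (Ioi 0)) (nhds 0) := by
    apply Tendsto.zero_mul_isBoundedUnder_le h1
    refine isBoundedUnder_of_eventually_le (a := μ * 1) ?_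
    filter_upwards [Ioo_mem_nhdsGT_of_mem (by norm_num : (0:ℝ) ∈ Ico 0 1)] with r hr
    have hr0 : (0:ℝ) < r := hr.1
    have : r ^ (2*μ - 1) ≤ 1 :=
      Real.rpow_le_one hr0.le hr.2.le (by linarith)
    have h' : (0:ℝ) ≤ r ^ (2*μ-1) := (Real.rpow_pos_of_pos hr0 _).le
    calc ‖μ * r ^ (2*μ - 1)‖ = μ * r ^ (2*μ-1) := by
          rw [Real.norm_eq_abs, abs_of_nonneg (by positivity)]
      _ ≤ μ * 1 := by nlinarith
  apply h2.congr'
  filter_upwards [self_mem_nhdsWithin] with r hr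
  exact (key r hr).symm

lemma Wr_integral (hμ : 1/2 ≤ μ) (hc : Measurable c) (hQ : ∀ s ∈ Ioi (0:ℝ), |c s| ≤ Q)
    (hw : ContDiffOn ℝ 2 w (Ioi 0))
    (hode : ∀ r ∈ Ioi (0:ℝ), deriv (deriv w) r = (c r + (μ ^ 2 - μ) / r ^ 2) * w r)
    {ε t : ℝ} (hε : 0 < ε) (hεt : ε ≤ t) :
    (∫ s in ε..t, c s * w s * s ^ μ) = Wr μ w t - Wr μ w ε := by
  apply intervalIntegral.integral_eq_sub_of_hasDerivAt
  · intro x hx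
    rw [uIcc_of_le hεt] at hx
    exact hasDerivAt_Wr hw hode (lt_of_lt_of_le hε hx.1)
  · exact integrableOn_F hμ hc hQ hw hε hεt

lemma pos_lemma (hμ : 1/2 ≤ μ) (hc : Measurable c) (hc0 : ∀ s ∈ Ioi (0:ℝ), 0 ≤ c s)
    (hQ : ∀ s ∈ Ioi (0:ℝ), |c s| ≤ Q)
    (hw : ContDiffOn ℝ 2 w (Ioi 0))
    (hode : ∀ r ∈ Ioi (0:ℝ), deriv (deriv w) r = (c r + (μ ^ 2 - μ) / r ^ 2) * w r)
    (h0 : Tendsto (fun r => w r / r ^ μ) (nhdsWithin 0 (Ioi 0)) (nhds 1))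
    (h0' : Tendsto (fun r => deriv w r / (μ * r ^ (μ - 1))) (nhdsWithin 0 (Ioi 0)) (nhds 1)) :
    ∀ r ∈ Ioi (0:ℝ), r ^ μ ≤ w r ∧ 0 < deriv w r := by
  have hμ0 : (0:ℝ) < μ := lt_of_lt_of_le (by norm_num) hμ
  -- positivity near 0
  obtain ⟨δ, hδ0, hδ⟩ : ∃ δ > 0, ∀ t ∈ Ioo (0:ℝ) δ, 0 < w t := by
    have hev : ∀ᶠ r in nhdsWithin 0 (Ioi 0), 1/2 < w r / r ^ μ :=
      h0.eventually (eventually_gt_nhds (by norm_num))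
    rw [eventually_iff, mem_nhdsGT_iff_exists_Ioo_subset] at hev
    obtain ⟨u, hu, hsub⟩ := hev
    refine ⟨u, hu, fun t ht => ?_⟩
    have h2 : (1:ℝ)/2 < w t / t ^ μ := hsub ht
    have h3 : (0:ℝ) < t ^ μ := Real.rpow_pos_of_pos ht.1 μ
    have h4 : 0 < w t / t ^ μ := lt_trans (by norm_num) h2
    have := mul_pos h4 h3
    rwa [div_mul_cancel₀ _ h3.ne'] at this
  -- the key step
  have key : ∀ t₀ ∈ Ioi (0:ℝ), (∀ t ∈ Ioo (0:ℝ) t₀, 0 < w t) →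
      ∀ t ∈ Ioo (0:ℝ) t₀, 0 ≤ Wr μ w t ∧ t ^ μ ≤ w t := by
    intro t₀ ht₀ hpos
    have Wnonneg : ∀ x ∈ Ioo (0:ℝ) t₀, 0 ≤ Wr μ w x := by
      intro x hx
      apply le_of_tendsto (Wr_tendsto hμ h0 h0')
      filter_upwards [Ioo_mem_nhdsGT_of_mem ⟨le_refl (0:ℝ), hx.1⟩] with ε hε
      have hint := Wr_integral hμ hc hQ hw hode hε.1 hε.2.le
      have hnn : 0 ≤ ∫ s in ε..x, c s * w s * s ^ μ := by
        apply intervalIntegral.integral_nonneg hε.2.le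
        intro s hs
        have hs0 : 0 < s := lt_of_lt_of_le hε.1 hs.1
        have hst : s < t₀ := lt_of_le_of_lt hs.2 hx.2
        exact mul_nonneg (mul_nonneg (hc0 s hs0) (hpos s ⟨hs0, hst⟩).le)
          (Real.rpow_pos_of_pos hs0 μ).le
      linarith
    intro t ht
    refine ⟨Wnonneg t ht, ?_⟩
    have hφt : (0:ℝ) < t ^ μ := Real.rpow_pos_of_pos ht.1 μ
    have h1 : 1 ≤ w t / t ^ μ := by
      apply le_of_tendsto h0
      filter_upwards [Ioo_mem_nhdsGT_of_mem ⟨le_refl (0:ℝ), ht.1⟩] with ε hε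
      have hm : MonotoneOn (fun s => w s / s ^ μ) (Icc ε t) := by
        apply monotoneOn_of_deriv_nonneg (convex_Icc ε t)
        · intro s hs
          have hs0 : 0 < s := lt_of_lt_of_le hε.1 hs.1
          exact (hasDerivAt_h hw hs0).continuousAt.continuousWithinAt
        · intro s hs
          rw [interior_Icc] at hs
          have hs0 : 0 < s := lt_trans hε.1 hs.1
          exact (hasDerivAt_h hw hs0).differentiableAt.differentiableWithinAt
        · intro s hs
          rw [interior_Icc] at hs
          have hs0 : 0 < s := lt_trans hε.1 hs.1
          rw [(hasDerivAt_h hw hs0).deriv]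
          exact div_nonneg (Wnonneg s ⟨hs0, lt_trans hs.2 ht.2⟩)
            (Real.rpow_pos_of_pos hs0 _).le
      exact hm ⟨le_refl ε, hε.2.le⟩ ⟨hε.2.le, le_refl t⟩ hε.2.le
    have := mul_le_mul_of_nonneg_right h1 hφt.le
    rwa [div_mul_cancel₀ _ hφt.ne', one_mul] at this
  -- w is positive everywhere
  have all_pos : ∀ t ∈ Ioi (0:ℝ), 0 < w t := by
    by_contra hcon
    push_neg at hcon
    obtain ⟨t₁, ht₁, hwt₁⟩ := hcon
    set T : Set ℝ := {t : ℝ | 0 < t ∧ w t ≤ 0} with hT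
    have hTne : T.Nonempty := ⟨t₁, ht₁, hwt₁⟩
    have hTbd : BddBelow T := ⟨0, fun x hx => hx.1.le⟩
    set t₀ := sInf T with ht₀def
    have ht₀δ : δ ≤ t₀ := le_csInf hTne (fun x hx => by
      by_contra hcc; push_neg at hcc
      exact absurd hx.2 (not_le.mpr (hδ x ⟨hx.1, hcc⟩)))
    have ht₀pos : 0 < t₀ := lt_of_lt_of_le hδ0 ht₀δ
    have hlt : ∀ t ∈ Ioo (0:ℝ) t₀, 0 < w t := by
      intro t htt
      by_contra hcc; push_neg at hcc
      exact absurd (csInf_le hTbd ⟨htt.1, hcc⟩) (not_le.mpr htt.2)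
    have hcont : ContinuousAt w t₀ := (hasDerivAt_w' hw ht₀pos).continuousAt
    have hwt₀ : w t₀ ≤ 0 := by
      by_contra hcc; push_neg at hcc
      have hev : w ⁻¹' (Ioi 0) ∈ nhds t₀ := hcont (Ioi_mem_nhds hcc)
      obtain ⟨η, hη0, hball⟩ := Metric.mem_nhds_iff.mp hev
      have : t₀ + η/2 ≤ t₀ := le_csInf hTne (fun x hx => by
        by_contra hcc2; push_neg at hcc2
        have hx0 : t₀ ≤ x := csInf_le hTbd hx
        have : x ∈ Metric.ball t₀ η := by
          rw [Metric.mem_ball, Real.dist_eq, abs_of_nonneg (by linarith)]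
          linarith
        exact absurd hx.2 (not_le.mpr (hball this)))
      linarith
    have hge := fun t htt => (key t₀ ht₀pos hlt t htt).2
    have hlim : Tendsto w (nhdsWithin t₀ (Iio t₀)) (nhds (w t₀)) :=
      hcont.continuousWithinAt.tendsto
    have htφ : Tendsto (fun t : ℝ => t ^ μ) (nhdsWithin t₀ (Iio t₀)) (nhds (t₀ ^ μ)) :=
      ((Real.continuousAt_rpow_const t₀ μ (Or.inl ht₀pos.ne')).continuousWithinAt).tendsto
    have hfin : t₀ ^ μ ≤ w t₀ := by
      apply le_of_tendsto_of_tendsto htφ hlim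
      have hIoo : Ioo (0:ℝ) t₀ ∈ nhdsWithin t₀ (Iio t₀) := by
        apply mem_nhdsWithin.mpr
        exact ⟨Ioi 0, isOpen_Ioi, ht₀pos, fun x hx => ⟨hx.1, hx.2⟩⟩
      filter_upwards [hIoo] with t htt
      exact hge t htt
    have := Real.rpow_pos_of_pos ht₀pos μ
    linarith
  -- conclusion
  intro r hr
  have hr0 : (0:ℝ) < r := hr
  have hmem : r ∈ Ioo (0:ℝ) (r+1) := ⟨hr0, by linarith⟩
  have hk := key (r+1) (by simp only [mem_Ioi]; linarith)
    (fun t htt => all_pos t htt.1) r hmem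
  refine ⟨hk.2, ?_⟩
  have hφr : (0:ℝ) < r ^ μ := Real.rpow_pos_of_pos hr0 μ
  have hφ'r : (0:ℝ) < r ^ (μ - 1) := Real.rpow_pos_of_pos hr0 _
  have hpos2 : 0 < deriv w r * r ^ μ := by
    have h5 : deriv w r * r ^ μ = Wr μ w r + w r * (μ * r ^ (μ - 1)) := by
      rw [Wr]; ring
    have h6 : 0 < w r * (μ * r ^ (μ - 1)) :=
      mul_pos (all_pos r hr) (mul_pos hμ0 hφ'r)
    have h7 := hk.1
    rw [h5]; linarith
  have h9 : 0 < (deriv w r * r ^ μ) / r ^ μ := div_pos hpos2 hφr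
  rwa [mul_div_cancel_right₀ _ hφr.ne'] at h9

lemma zero_lemma (hμ : 1/2 ≤ μ) (hQ0 : 0 ≤ Q) (hc : Measurable c)
    (hQ : ∀ s ∈ Ioi (0:ℝ), |c s| ≤ Q)
    (hw : ContDiffOn ℝ 2 w (Ioi 0))
    (hode : ∀ r ∈ Ioi (0:ℝ), deriv (deriv w) r = (c r + (μ ^ 2 - μ) / r ^ 2) * w r)
    (h0 : Tendsto (fun r => w r / r ^ μ) (nhdsWithin 0 (Ioi 0)) (nhds 0))
    (h0' : Tendsto (fun r => deriv w r / (μ * r ^ (μ - 1))) (nhdsWithin 0 (Ioi 0)) (nhds 0)) :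
    ∀ r ∈ Ioi (0:ℝ), w r = 0 ∧ deriv w r = 0 := by
  have hμ0 : (0:ℝ) < μ := lt_of_lt_of_le (by norm_num) hμ
  have h2μ : (0:ℝ) < 2*μ+1 := by linarith
  -- one improvement step for the Gronwall-type bootstrap near zero
  have step : ∀ R : ℝ, 0 < R → ∀ B : ℝ, 0 ≤ B → (∀ t ∈ Ioc (0:ℝ) R, |w t| ≤ B * t ^ μ) →
      ∀ t ∈ Ioc (0:ℝ) R, |w t| ≤ (Q * B * t^2 / (2*(2*μ+1))) * t ^ μ := by
    intro R hR B hB hbd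
    have Wbd : ∀ t ∈ Ioc (0:ℝ) R, |Wr μ w t| ≤ Q * B * t ^ (2*μ+1) / (2*μ+1) := by
      intro t ht
      have htend : Tendsto (fun ε => |Wr μ w ε| + Q*B*t^(2*μ+1)/(2*μ+1))
          (nhdsWithin 0 (Ioi 0)) (nhds (Q*B*t^(2*μ+1)/(2*μ+1))) := by
        have h1 := ((Wr_tendsto hμ h0 h0').abs).add_const (Q*B*t^(2*μ+1)/(2*μ+1))
        simpa using h1
      apply ge_of_tendsto htend
      filter_upwards [Ioo_mem_nhdsGT_of_mem ⟨le_refl (0:ℝ), ht.1⟩] with ε hε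
      have hint := Wr_integral hμ hc hQ hw hode hε.1 hε.2.le
      have h1 : |Wr μ w t| ≤ |Wr μ w ε| + |∫ s in ε..t, c s * w s * s^μ| := by
        have : Wr μ w t = Wr μ w ε + ∫ s in ε..t, c s * w s * s^μ := by linarith
        rw [this]; exact abs_add_le _ _
      have hrhsint : IntervalIntegrable (fun s : ℝ => Q*B*s^(2*μ)) volume ε t := by
        apply ContinuousOn.intervalIntegrable
        have hsub : uIcc ε t ⊆ Ioi (0:ℝ) := by
          rw [uIcc_of_le hε.2.le]; exact fun x hx => lt_of_lt_of_le hε.1 hx.1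
        exact continuousOn_const.mul (contOn_rpow.mono hsub)
      have h2 : |∫ s in ε..t, c s * w s * s ^ μ| ≤ ∫ s in ε..t, Q*B*s^(2*μ) := by
        refine le_trans (intervalIntegral.abs_integral_le_integral_abs hε.2.le) ?_
        apply intervalIntegral.integral_mono_on hε.2.le
          ((integrableOn_F hμ hc hQ hw hε.1 hε.2.le).abs) hrhsint
        intro x hx
        have hx0 : 0 < x := lt_of_lt_of_le hε.1 hx.1
        have hxR : x ≤ R := le_trans hx.2 ht.2
        have hφ : (0:ℝ) < x ^ μ := Real.rpow_pos_of_pos hx0 μ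
        have hcx : |c x| ≤ Q := hQ x hx0
        have hwx : |w x| ≤ B * x ^ μ := hbd x ⟨hx0, hxR⟩
        have h2μeq : x ^ (2*μ) = x ^ μ * x ^ μ := by
          rw [← Real.rpow_add hx0]; ring_nf
        rw [abs_mul, abs_mul, abs_of_nonneg hφ.le, h2μeq]
        calc |c x| * |w x| * x ^ μ ≤ Q * (B * x ^ μ) * x ^ μ := by
              apply mul_le_mul_of_nonneg_right _ hφ.le
              exact mul_le_mul hcx hwx (abs_nonneg _) hQ0
          _ = Q * B * (x ^ μ * x ^ μ) := by ring
      have h3 : ∫ s in ε..t, Q*B*s^(2*μ) = Q*B*((t^(2*μ+1) - ε^(2*μ+1))/(2*μ+1)) := by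
        rw [intervalIntegral.integral_const_mul, integral_rpow (Or.inl (by linarith))]
      have h4 : (0:ℝ) ≤ ε^(2*μ+1) := (Real.rpow_pos_of_pos hε.1 _).le
      have h5 : 0 ≤ Q * B := mul_nonneg hQ0 hB
      rw [h3] at h2
      have : Q*B*((t^(2*μ+1) - ε^(2*μ+1))/(2*μ+1)) ≤ Q*B*t^(2*μ+1)/(2*μ+1) := by
        rw [mul_div_assoc]
        apply mul_le_mul_of_nonneg_left _ h5
        gcongr
        linarith
      linarith
    -- part (iii): integrate the bound on the derivative of w/φ
    intro t ht
    set C2 := Q*B/(2*(2*μ+1)) with hC2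
    have hC2nn : 0 ≤ C2 := by positivity
    have hφt : (0:ℝ) < t ^ μ := Real.rpow_pos_of_pos ht.1 μ
    have hht : |w t / t^μ| ≤ C2 * t^2 := by
      have htend : Tendsto (fun ε => |w ε / ε^μ| + C2*t^2)
          (nhdsWithin 0 (Ioi 0)) (nhds (C2*t^2)) := by
        have h1 := (h0.abs).add_const (C2*t^2)
        simpa using h1
      apply ge_of_tendsto htend
      filter_upwards [Ioo_mem_nhdsGT_of_mem ⟨le_refl (0:ℝ), ht.1⟩] with ε hε
      have hmono : ∀ σ : ℝ, |σ| = 1 →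
          MonotoneOn (fun s => C2*s^2 + σ * (w s / s^μ)) (Icc ε t) := by
        intro σ hσ
        have HD : ∀ s : ℝ, 0 < s → HasDerivAt (fun s => C2*s^2 + σ * (w s / s^μ))
            (C2*(2*s) + σ*(Wr μ w s / s^(2*μ))) s := by
          intro s hs0
          have hq : HasDerivAt (fun s : ℝ => s^2) (2*s) s := by
            simpa using hasDerivAt_pow 2 s
          exact (hq.const_mul C2).add ((hasDerivAt_h hw hs0).const_mul σ)
        apply monotoneOn_of_deriv_nonneg (convex_Icc ε t)
        · intro s hs
          exact (HD s (lt_of_lt_of_le hε.1 hs.1)).continuousAt.continuousWithinAt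
        · intro s hs
          rw [interior_Icc] at hs
          exact (HD s (lt_trans hε.1 hs.1)).differentiableAt.differentiableWithinAt
        · intro s hs
          rw [interior_Icc] at hs
          have hs0 : 0 < s := lt_trans hε.1 hs.1
          rw [(HD s hs0).deriv]
          have hsR : s ∈ Ioc (0:ℝ) R := ⟨hs0, le_trans hs.2.le ht.2⟩
          have hWs := Wbd s hsR
          have hs2μ : (0:ℝ) < s ^ (2*μ) := Real.rpow_pos_of_pos hs0 _
          have hkey : |Wr μ w s / s^(2*μ)| ≤ 2*C2*s := by
            rw [abs_div, abs_of_nonneg hs2μ.le, div_le_iff₀ hs2μ]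
            have hseq : s ^ (2*μ+1) = s ^ (2*μ) * s := by
              rw [Real.rpow_add hs0, Real.rpow_one]
            calc |Wr μ w s| ≤ Q * B * s ^ (2*μ+1) / (2*μ+1) := hWs
              _ = 2*C2*s * s^(2*μ) := by rw [hseq, hC2]; field_simp
          have h6 : |σ*(Wr μ w s / s^(2*μ))| ≤ 2*C2*s := by
            rw [abs_mul, hσ, one_mul]; exact hkey
          have h7 := neg_abs_le (σ*(Wr μ w s / s^(2*μ)))
          linarith
      have hεI : ε ∈ Icc ε t := ⟨le_refl ε, hε.2.le⟩
      have htI : t ∈ Icc ε t := ⟨hε.2.le, le_refl t⟩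
      have hup := hmono (-1) (by norm_num) hεI htI hε.2.le
      have hdown := hmono 1 (by norm_num) hεI htI hε.2.le
      simp only at hup hdown
      have hε2 : (0:ℝ) ≤ C2 * ε^2 := by positivity
      have ha1 := le_abs_self (w ε / ε^μ)
      have ha2 := neg_abs_le (w ε / ε^μ)
      rw [abs_le]
      constructor <;> nlinarith
    have habs : |w t / t^μ| = |w t| / t^μ := by
      rw [abs_div, abs_of_nonneg hφt.le]
    rw [habs, div_le_iff₀ hφt] at hht
    calc |w t| ≤ C2 * t^2 * t ^ μ := hht
      _ = Q * B * t^2 / (2*(2*μ+1)) * t ^ μ := by rw [hC2]; ring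
  -- choose a suitable R
  obtain ⟨δ, hδ0, hδ⟩ : ∃ δ > 0, ∀ t ∈ Ioc (0:ℝ) δ, |w t| ≤ 1 * t ^ μ := by
    have hev : ∀ᶠ r in nhdsWithin 0 (Ioi 0), |w r / r^μ| < 1 := by
      have h1 := h0.abs
      simp only [abs_zero] at h1
      exact h1.eventually (eventually_lt_nhds one_pos)
    rw [eventually_iff, mem_nhdsGT_iff_exists_Ioo_subset] at hev
    obtain ⟨u, hu, hsub⟩ := hev
    have hu0 : (0:ℝ) < u := hu
    refine ⟨u/2, half_pos hu0, fun t htm => ?_⟩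
    have ht0 : 0 < t := htm.1
    have hφ : (0:ℝ) < t ^ μ := Real.rpow_pos_of_pos ht0 μ
    have h2 : |w t / t^μ| < 1 := hsub ⟨ht0, by linarith [htm.2]⟩
    rw [abs_div, abs_of_nonneg hφ.le, div_lt_one hφ] at h2
    rw [one_mul]
    exact h2.le
  set r₁ := Real.sqrt ((2*μ+1)/(Q+1)) with hr₁def
  have hr₁ : 0 < r₁ := Real.sqrt_pos.mpr (by positivity)
  have hr₁sq : Q * r₁^2 / (2*(2*μ+1)) ≤ 1/2 := by
    have h1 : r₁^2 = (2*μ+1)/(Q+1) := Real.sq_sqrt (by positivity)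
    rw [h1, div_le_div_iff₀ (by positivity) (by norm_num)]
    have : Q * ((2*μ+1)/(Q+1)) = Q * (2*μ+1) / (Q+1) := by ring
    rw [this, div_mul_eq_mul_div, div_le_iff₀ (by positivity)]
    nlinarith
  set R := min δ r₁ with hRdef
  have hR0 : 0 < R := lt_min hδ0 hr₁
  have hRδ : R ≤ δ := min_le_left _ _
  have hRr₁ : R ≤ r₁ := min_le_right _ _
  have ind : ∀ n : ℕ, ∀ t ∈ Ioc (0:ℝ) R, |w t| ≤ (1/2)^n * t ^ μ := by
    intro n
    induction n with
    | zero => simpa using fun t ht htR => hδ t ⟨ht, le_trans htR hRδ⟩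
    | succ n ih =>
      intro t ht
      have h1 := step R hR0 ((1/2)^n) (by positivity) ih t ht
      have ht2 : t^2 ≤ r₁^2 := by
        have := ht.2.trans hRr₁
        nlinarith [ht.1]
      have h2 : Q * (1/2:ℝ)^n * t^2/(2*(2*μ+1)) ≤ (1/2) * (1/2)^n := by
        have h3 : Q * (1/2:ℝ)^n * t^2/(2*(2*μ+1))
            = (Q * t^2 / (2*(2*μ+1))) * (1/2)^n := by ring
        have h4 : Q * t^2 / (2*(2*μ+1)) ≤ 1/2 := by
          refine le_trans ?_ hr₁sq
          gcongr
        rw [h3]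
        apply mul_le_mul_of_nonneg_right h4 (by positivity)
      have hφ : (0:ℝ) ≤ t ^ μ := (Real.rpow_pos_of_pos ht.1 μ).le
      calc |w t| ≤ Q * (1/2)^n * t^2 / (2*(2*μ+1)) * t ^ μ := h1
        _ ≤ ((1/2) * (1/2)^n) * t ^ μ := mul_le_mul_of_nonneg_right h2 hφ
        _ = (1/2)^(n+1) * t ^ μ := by ring
  have hzero : ∀ t ∈ Ioc (0:ℝ) R, w t = 0 := by
    intro t ht
    have hle : |w t| ≤ 0 := by
      have htd : Tendsto (fun n : ℕ => (1/2:ℝ)^n * t ^ μ) atTop (nhds 0) := by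
        have := tendsto_pow_atTop_nhds_zero_of_lt_one (by norm_num : (0:ℝ) ≤ 1/2)
          (by norm_num : (1/2:ℝ) < 1)
        simpa using this.mul_const (t ^ μ)
      exact ge_of_tendsto htd (Eventually.of_forall (fun n => ind n t ht))
    exact abs_nonpos_iff.mp hle
  have hdzero : ∀ t ∈ Ioo (0:ℝ) R, deriv w t = 0 := by
    intro t ht
    have hev : w =ᶠ[nhds t] (fun _ => (0:ℝ)) := by
      filter_upwards [isOpen_Ioo.mem_nhds ht] with x hx
      exact hzero x ⟨hx.1, hx.2.le⟩
    rw [hev.deriv_eq]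
    simp
  -- propagate by Gronwall's inequality
  set a := R/2 with hadef
  have ha0 : 0 < a := by positivity
  have haR : a ∈ Ioo (0:ℝ) R := ⟨ha0, by rw [hadef]; linarith⟩
  have hwa : w a = 0 := hzero a ⟨ha0, haR.2.le⟩
  have hdwa : deriv w a = 0 := hdzero a haR
  have grow : ∀ b, a ≤ b → w b = 0 ∧ deriv w b = 0 := by
    intro b hb
    set K := max 1 (Q + |μ^2 - μ|/a^2) with hK
    set f : ℝ → ℝ × ℝ := fun t => (w t, deriv w t) with hf
    have hsub : Icc a b ⊆ Ioi (0:ℝ) := fun x hx => lt_of_lt_of_le ha0 hx.1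
    have hfc : ContinuousOn f (Icc a b) := by
      apply ContinuousOn.prodMk
      · exact (hw.continuousOn.mono hsub)
      · exact (hw.continuousOn_deriv_of_isOpen isOpen_Ioi (by norm_num)).mono hsub
    have hf' : ∀ x ∈ Ico a b, HasDerivWithinAt f
        (deriv w x, deriv (deriv w) x) (Ici x) x := by
      intro x hx
      have hx0 : 0 < x := lt_of_lt_of_le ha0 hx.1
      exact ((hasDerivAt_w' hw hx0).prodMk (hasDerivAt_dw' hw hx0)).hasDerivWithinAt
    have hbound : ∀ x ∈ Ico a b,
        ‖(deriv w x, deriv (deriv w) x)‖ ≤ K * ‖f x‖ + 0 := by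
      intro x hx
      have hx0 : 0 < x := lt_of_lt_of_le ha0 hx.1
      have hK1 : (1:ℝ) ≤ K := le_max_left _ _
      have hfx0 : 0 ≤ ‖f x‖ := norm_nonneg _
      rw [add_zero, Prod.norm_def]
      apply max_le
      · calc ‖deriv w x‖ ≤ ‖f x‖ := by
              rw [Prod.norm_def]; exact le_max_right _ _
          _ = 1 * ‖f x‖ := (one_mul _).symm
          _ ≤ K * ‖f x‖ := mul_le_mul_of_nonneg_right hK1 hfx0
      · have hwx : ‖w x‖ ≤ ‖f x‖ := by
          rw [Prod.norm_def]; exact le_max_left _ _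
        have hcc : |c x + (μ^2-μ)/x^2| ≤ Q + |μ^2-μ|/a^2 := by
          have h1 : |c x| ≤ Q := hQ x hx0
          have h2 : |(μ^2-μ)/x^2| ≤ |μ^2-μ|/a^2 := by
            rw [abs_div, abs_of_nonneg (by positivity : (0:ℝ) ≤ x^2)]
            have hax : a^2 ≤ x^2 := by nlinarith [hx.1]
            gcongr
          calc |c x + (μ^2-μ)/x^2| ≤ |c x| + |(μ^2-μ)/x^2| := abs_add_le _ _
            _ ≤ Q + |μ^2-μ|/a^2 := add_le_add h1 h2
        have hQK : Q + |μ^2-μ|/a^2 ≤ K := le_max_right _ _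
        calc ‖deriv (deriv w) x‖ = |c x + (μ^2-μ)/x^2| * |w x| := by
              rw [hode x hx0, Real.norm_eq_abs, abs_mul]
          _ ≤ K * ‖f x‖ := by
              apply mul_le_mul (le_trans hcc hQK) ?_ (abs_nonneg _)
                (le_trans (by positivity) hQK)
              rwa [← Real.norm_eq_abs]
    have hend := norm_le_gronwallBound_of_norm_deriv_right_le hfc hf'
      (by simp [hf, hwa, hdwa] : ‖f a‖ ≤ 0) hbound b ⟨hb, le_refl b⟩
    rw [gronwallBound_ε0_δ0] at hend
    have hfb : f b = 0 := by
      have := le_antisymm hend (norm_nonneg _)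
      rwa [norm_eq_zero] at this
    exact ⟨congrArg Prod.fst hfb, congrArg Prod.snd hfb⟩
  intro r hr
  rcases lt_or_ge r R with h | h
  · exact ⟨hzero r ⟨hr, h.le⟩, hdzero r ⟨hr, h⟩⟩
  · exact grow r (le_trans (by rw [hadef]; linarith) h)

end Stmt6Aux

open Stmt6Aux in
/-- For real `λ` the values `j_m(r,λ)` and `j_m'(r,λ)` are real; for `λ ≤ 0` one has
`j_m(r,λ) ≥ r^{|m|+1/2}` and `j_m'(r,λ) > 0` (Lemma 3.2 of the paper). -/
theorem stmt6
    (m : ℤ) (q : ℝ → ℝ) (hqm : Measurable q) (hq0 : ∀ r, 0 ≤ q r)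
    (hqbdd : BddAbove (q '' Set.Ici 0))
    (j : ℝ → ℂ → ℂ)
    (hjs : ∀ l : ℂ, ContDiffOn ℝ 2 (fun r => j r l) (Set.Ioi 0))
    (hode : ∀ l : ℂ, ∀ r ∈ Set.Ioi (0:ℝ),
      deriv (deriv (fun s => j s l)) r
        + (l - (q r : ℂ) - ((m:ℂ) ^ 2 - 1/4) / (r:ℂ) ^ 2) * j r l = 0)
    (hnorm : ∀ l : ℂ, Tendsto (fun r : ℝ => j r l / ((r ^ ((|m| : ℝ) + 1/2) : ℝ) : ℂ))
      (nhdsWithin 0 (Set.Ioi 0)) (nhds 1))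
    (hnorm' : ∀ l : ℂ, Tendsto (fun r : ℝ => deriv (fun s => j s l) r /
        (((((|m| : ℝ) + 1/2) * r ^ ((|m| : ℝ) - 1/2)) : ℝ) : ℂ))
      (nhdsWithin 0 (Set.Ioi 0)) (nhds 1)) :
    ∀ lam : ℝ,
      (∀ r ∈ Set.Ioi (0:ℝ),
        (j r (lam:ℂ)).im = 0 ∧ (deriv (fun s => j s (lam:ℂ)) r).im = 0) ∧
      (lam ≤ 0 → ∀ r ∈ Set.Ioi (0:ℝ),
        r ^ ((|m| : ℝ) + 1/2) ≤ (j r (lam:ℂ)).re ∧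
        0 < (deriv (fun s => j s (lam:ℂ)) r).re) := by
  intro lam
  have hM0 : (0:ℝ) ≤ (|m| : ℝ) := by positivity
  have hM2 : ((|m| : ℝ))^2 = (m:ℝ)^2 := by push_cast [sq_abs]; ring
  have hμ : (1:ℝ)/2 ≤ (|m| : ℝ) + 1/2 := by linarith
  have hμμ : ((|m| : ℝ) + 1/2)^2 - ((|m| : ℝ) + 1/2) = (m:ℝ)^2 - 1/4 := by
    rw [← hM2]; ring
  set J : ℝ → ℂ := fun s => j s (lam:ℂ) with hJ
  set c : ℝ → ℝ := fun s => q s - lam with hcdef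
  set Q : ℝ := sSup (q '' Ici 0) + |lam| with hQdef
  have hcm : Measurable c := hqm.sub measurable_const
  have hsup0 : 0 ≤ sSup (q '' Ici 0) :=
    le_trans (hq0 0) (le_csSup hqbdd ⟨0, self_mem_Ici, rfl⟩)
  have hQ0 : 0 ≤ Q := by rw [hQdef]; positivity
  have hQb : ∀ s ∈ Ioi (0:ℝ), |c s| ≤ Q := by
    intro s hs
    have h1 : q s ≤ sSup (q '' Ici 0) := le_csSup hqbdd ⟨s, mem_Ici.mpr (le_of_lt hs), rfl⟩
    rw [hcdef, hQdef]
    calc |q s - lam| ≤ |q s| + |lam| := abs_sub _ _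
      _ ≤ sSup (q '' Ici 0) + |lam| := by
          rw [abs_of_nonneg (hq0 s)]; linarith
  -- complexified ODE with real coefficient
  have hz : ∀ r ∈ Ioi (0:ℝ), deriv (deriv J) r
      = (((c r + (((|m| : ℝ) + 1/2)^2 - ((|m| : ℝ) + 1/2))/r^2 : ℝ)) : ℂ) * J r := by
    intro r hr
    have h := hode (lam:ℂ) r hr
    have hr0 : (r:ℝ) ≠ 0 := ne_of_gt hr
    have h2 : deriv (deriv J) r
        = -((lam:ℂ) - (q r : ℂ) - ((m:ℂ)^2 - 1/4)/(r:ℂ)^2) * J r := by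
      rw [hJ]
      rw [neg_mul]
      exact eq_neg_of_add_eq_zero_left h
    rw [h2, hcdef]
    congr 1
    rw [hμμ]
    push_cast [hr0]
    ring
  -- real and imaginary parts
  set u : ℝ → ℝ := fun s => (J s).re with hu
  set v : ℝ → ℝ := fun s => (J s).im with hv
  have hucd : ContDiffOn ℝ 2 u (Ioi 0) :=
    Complex.reCLM.contDiff.comp_contDiffOn (hjs (lam:ℂ))
  have hvcd : ContDiffOn ℝ 2 v (Ioi 0) :=
    Complex.imCLM.contDiff.comp_contDiffOn (hjs (lam:ℂ))
  have hJd : ∀ r ∈ Ioi (0:ℝ), DifferentiableAt ℝ J r :=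
    fun r hr => (hasDerivAt_w' (hjs (lam:ℂ)) hr).differentiableAt
  have hud : ∀ r ∈ Ioi (0:ℝ), deriv u r = (deriv J r).re :=
    fun r hr => deriv_comp_re (hJd r hr)
  have hvd : ∀ r ∈ Ioi (0:ℝ), deriv v r = (deriv J r).im :=
    fun r hr => deriv_comp_im (hJd r hr)
  have hud2 : ∀ r ∈ Ioi (0:ℝ), deriv (deriv u) r = (deriv (deriv J) r).re := by
    intro r hr
    have hev : deriv u =ᶠ[nhds r] fun s => (deriv J s).re := by
      filter_upwards [Ioi_mem_nhds hr] with x hx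
      exact hud x hx
    rw [hev.deriv_eq, deriv_comp_re (hasDerivAt_dw' (hjs (lam:ℂ)) hr).differentiableAt]
  have hvd2 : ∀ r ∈ Ioi (0:ℝ), deriv (deriv v) r = (deriv (deriv J) r).im := by
    intro r hr
    have hev : deriv v =ᶠ[nhds r] fun s => (deriv J s).im := by
      filter_upwards [Ioi_mem_nhds hr] with x hx
      exact hvd x hx
    rw [hev.deriv_eq, deriv_comp_im (hasDerivAt_dw' (hjs (lam:ℂ)) hr).differentiableAt]
  -- real ODEs
  have hodeu : ∀ r ∈ Ioi (0:ℝ), deriv (deriv u) r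
      = (c r + (((|m| : ℝ) + 1/2)^2 - ((|m| : ℝ) + 1/2))/r^2) * u r := by
    intro r hr
    rw [hud2 r hr, hz r hr, hu]
    exact Complex.re_ofReal_mul _ _
  have hodev : ∀ r ∈ Ioi (0:ℝ), deriv (deriv v) r
      = (c r + (((|m| : ℝ) + 1/2)^2 - ((|m| : ℝ) + 1/2))/r^2) * v r := by
    intro r hr
    rw [hvd2 r hr, hz r hr, hv]
    exact Complex.im_ofReal_mul _ _
  -- limits
  have h0u : Tendsto (fun r => u r / r ^ ((|m| : ℝ) + 1/2))
      (nhdsWithin 0 (Ioi 0)) (nhds 1) := by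
    have h1 := (Complex.continuous_re.tendsto 1).comp (hnorm (lam:ℂ))
    simpa [Function.comp_def, Complex.div_ofReal_re] using h1
  have h0v : Tendsto (fun r => v r / r ^ ((|m| : ℝ) + 1/2))
      (nhdsWithin 0 (Ioi 0)) (nhds 0) := by
    have h1 := (Complex.continuous_im.tendsto 1).comp (hnorm (lam:ℂ))
    simpa [Function.comp_def, Complex.div_ofReal_im] using h1
  have hexp : (|m| : ℝ) + 1/2 - 1 = (|m| : ℝ) - 1/2 := by ring
  have h0u' : Tendsto (fun r => deriv u r / (((|m| : ℝ) + 1/2) * r ^ ((|m| : ℝ) + 1/2 - 1)))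
      (nhdsWithin 0 (Ioi 0)) (nhds 1) := by
    have h2 : Tendsto (fun r : ℝ => (deriv J r).re /
        (((|m| : ℝ) + 1/2) * r ^ ((|m| : ℝ) - 1/2))) (nhdsWithin 0 (Ioi 0)) (nhds 1) := by
      have h1 := (Complex.continuous_re.tendsto 1).comp (hnorm' (lam:ℂ))
      simp only [Function.comp_def, Complex.div_ofReal_re, Complex.one_re] at h1
      exact h1
    rw [hexp]
    apply Tendsto.congr' _ h2
    filter_upwards [self_mem_nhdsWithin] with r hr
    rw [hud r hr]
  have h0v' : Tendsto (fun r => deriv v r / (((|m| : ℝ) + 1/2) * r ^ ((|m| : ℝ) + 1/2 - 1)))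
      (nhdsWithin 0 (Ioi 0)) (nhds 0) := by
    have h2 : Tendsto (fun r : ℝ => (deriv J r).im /
        (((|m| : ℝ) + 1/2) * r ^ ((|m| : ℝ) - 1/2))) (nhdsWithin 0 (Ioi 0)) (nhds 0) := by
      have h1 := (Complex.continuous_im.tendsto 1).comp (hnorm' (lam:ℂ))
      simp only [Function.comp_def, Complex.div_ofReal_im, Complex.one_im] at h1
      exact h1
    rw [hexp]
    apply Tendsto.congr' _ h2
    filter_upwards [self_mem_nhdsWithin] with r hr
    rw [hvd r hr]
  constructor
  · -- imaginary part vanishes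
    intro r hr
    have hzero := zero_lemma hμ hQ0 hcm hQb hvcd hodev h0v h0v' r hr
    exact ⟨hzero.1, by rw [← hvd r hr]; exact hzero.2⟩
  · -- positivity
    intro hlam r hr
    have hc0 : ∀ s ∈ Ioi (0:ℝ), 0 ≤ c s := fun s _ => by
      rw [hcdef]; have := hq0 s; simp only; linarith
    have hpos := pos_lemma hμ hcm hc0 hQb hucd hodeu h0u h0u' r hr
    exact ⟨hpos.1, by rw [← hud r hr]; exact hpos.2⟩
end

section
/- For a fixed r > 0 and a bounded set Λ ⊂ [0,∞), if |m| is sufficiently large then j_m(r,λ) > 0 and j_m'(r,λ) > 0 for all λ ∈ Λ. -/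
open Filter

/-- For fixed `r > 0` and a bounded set `Λ ⊆ [0,∞)`, if `|m|` is large enough then
`j_m(r,λ) > 0` and `j_m'(r,λ) > 0` for all `λ ∈ Λ` (Lemma 3.3 of the paper). -/
theorem stmt7
    (q : ℝ → ℝ) (hqm : Measurable q) (hq0 : ∀ r, 0 ≤ q r)
    (hqbdd : BddAbove (q '' Set.Ici 0))
    (j : ℤ → ℝ → ℝ → ℝ)
    (hjs : ∀ (m : ℤ) (lam : ℝ), ContDiffOn ℝ 2 (fun s => j m s lam) (Set.Ioi 0))
    (hode : ∀ (m : ℤ) (lam : ℝ), ∀ s ∈ Set.Ioi (0:ℝ),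
      deriv (deriv (fun t => j m t lam)) s
        + (lam - q s - ((m:ℝ) ^ 2 - 1/4) / s ^ 2) * j m s lam = 0)
    (hnorm : ∀ (m : ℤ) (lam : ℝ),
      Tendsto (fun s : ℝ => j m s lam / s ^ ((|m| : ℝ) + 1/2))
        (nhdsWithin 0 (Set.Ioi 0)) (nhds 1))
    (hnorm' : ∀ (m : ℤ) (lam : ℝ),
      Tendsto (fun s : ℝ => deriv (fun t => j m t lam) s /
          (((|m| : ℝ) + 1/2) * s ^ ((|m| : ℝ) - 1/2)))
        (nhdsWithin 0 (Set.Ioi 0)) (nhds 1))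
    (r : ℝ) (hr : 0 < r)
    (Λ : Set ℝ) (hΛ : Λ ⊆ Set.Ici 0) (hΛb : Bornology.IsBounded Λ) :
    ∃ M : ℕ, ∀ m : ℤ, (M : ℤ) ≤ |m| → ∀ lam ∈ Λ,
      0 < j m r lam ∧ 0 < deriv (fun t => j m t lam) r := by
  obtain ⟨C, hC⟩ := hΛb.exists_norm_le
  refine ⟨⌈C * r ^ 2⌉₊ + 1, ?_⟩
  set M : ℕ := ⌈C * r ^ 2⌉₊ + 1 with hMdef
  intro m hm lam hlam
  have hlam0 : (0:ℝ) ≤ lam := hΛ hlam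
  have hlamC : lam ≤ C := le_trans (le_abs_self lam) (by simpa [Real.norm_eq_abs] using hC lam hlam)
  have hC0 : (0:ℝ) ≤ C := le_trans (norm_nonneg lam) (hC lam hlam)
  have hMC : C * r ^ 2 + 1 ≤ (M:ℝ) := by
    have := Nat.le_ceil (C * r ^ 2)
    rw [hMdef]; push_cast; linarith
  have hM1 : (1:ℝ) ≤ (M:ℝ) := by
    rw [hMdef]; push_cast; have h0 : (0:ℝ) ≤ (⌈C * r ^ 2⌉₊ : ℝ) := Nat.cast_nonneg _; linarith
  have hmM : (M:ℝ) ≤ |(m:ℝ)| := by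
    have : ((M:ℤ):ℝ) ≤ ((|m|:ℤ):ℝ) := by exact_mod_cast hm
    simpa [Int.cast_abs] using this
  have hmsq : (M:ℝ) ^ 2 ≤ (m:ℝ) ^ 2 := by
    have h1 : (M:ℝ) ^ 2 ≤ |(m:ℝ)| ^ 2 :=
      pow_le_pow_left₀ (by linarith) hmM 2
    simpa [sq_abs] using h1
  -- the coefficient is nonpositive on (0, r]
  have hcoef : ∀ s : ℝ, 0 < s → s ≤ r → 0 ≤ q s + ((m:ℝ) ^ 2 - 1/4) / s ^ 2 - lam := by
    intro s hs hsr
    have hs2 : (0:ℝ) < s ^ 2 := by positivity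
    have hnum : lam * s ^ 2 ≤ (m:ℝ) ^ 2 - 1/4 := by
      have hsr2 : s ^ 2 ≤ r ^ 2 := by nlinarith
      have h1 : lam * s ^ 2 ≤ lam * r ^ 2 := by nlinarith
      have h2 : lam * r ^ 2 ≤ C * r ^ 2 := by nlinarith [sq_nonneg r]
      nlinarith [sq_nonneg ((M:ℝ) - 1)]
    have hdiv : lam ≤ ((m:ℝ) ^ 2 - 1/4) / s ^ 2 := by
      rw [le_div_iff₀ hs2]; exact hnum
    have := hq0 s
    linarith
  -- notation
  set f : ℝ → ℝ := fun t => j m t lam with hfdef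
  set g : ℝ → ℝ := deriv f with hgdef
  have hf2 : ContDiffOn ℝ 2 f (Set.Ioi 0) := hjs m lam
  have hg1 : ContDiffOn ℝ 1 g (Set.Ioi 0) :=
    hf2.deriv_of_isOpen isOpen_Ioi (by norm_num)
  have hfc : ContinuousOn f (Set.Ioi 0) := hf2.continuousOn
  have hgc : ContinuousOn g (Set.Ioi 0) := hg1.continuousOn
  have hgd : DifferentiableOn ℝ g (Set.Ioi 0) := hg1.differentiableOn (by norm_num)
  -- the second derivative identity
  have hg' : ∀ x : ℝ, 0 < x → x ≤ r →
      deriv g x = (q x + ((m:ℝ) ^ 2 - 1/4) / x ^ 2 - lam) * f x := by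
    intro x hx _
    have := hode m lam x (Set.mem_Ioi.mpr hx)
    rw [hgdef, hfdef]
    linarith [this]
  -- find a starting point s0 near 0
  have hα : (0:ℝ) < (|m|:ℝ) + 1/2 := by positivity
  have h1 := (hnorm m lam).eventually (lt_mem_nhds (by norm_num : (0:ℝ) < 1))
  have h2 := (hnorm' m lam).eventually (lt_mem_nhds (by norm_num : (0:ℝ) < 1))
  have h3 : ∀ᶠ s in nhdsWithin 0 (Set.Ioi 0), s ∈ Set.Ioo (0:ℝ) r :=
    eventually_mem_nhdsWithin.filter_mono (le_of_eq rfl) |>.mp (Filter.eventually_of_mem (Ioo_mem_nhdsGT_of_mem ⟨le_rfl, hr⟩) fun x hx _ => hx)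
  obtain ⟨s0, hs01, hs02, hs03⟩ := (h1.and (h2.and h3)).exists
  obtain ⟨hs0pos, hs0r⟩ := hs03
  have hfs0 : 0 < f s0 := by
    have hp : (0:ℝ) < s0 ^ ((|m|:ℝ) + 1/2) := Real.rpow_pos_of_pos hs0pos _
    have := mul_pos hs01 hp
    rwa [div_mul_cancel₀ _ (ne_of_gt hp)] at this
  have hgs0 : 0 < g s0 := by
    have hp : (0:ℝ) < ((|m|:ℝ) + 1/2) * s0 ^ ((|m|:ℝ) - 1/2) :=
      mul_pos hα (Real.rpow_pos_of_pos hs0pos _)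
    have := mul_pos hs02 hp
    rwa [div_mul_cancel₀ _ (ne_of_gt hp)] at this
  -- key step: positivity propagates
  have key : ∀ b : ℝ, s0 < b → b ≤ r → (∀ x ∈ Set.Ico s0 b, 0 < f x) →
      0 < f b ∧ 0 < g b := by
    intro b hs0b hbr hpos
    have hsub : Set.Icc s0 b ⊆ Set.Ioi 0 := fun x hx => lt_of_lt_of_le hs0pos hx.1
    have hint : interior (Set.Icc s0 b) = Set.Ioo s0 b := interior_Icc
    have hgmono : MonotoneOn g (Set.Icc s0 b) := by
      apply monotoneOn_of_deriv_nonneg (convex_Icc s0 b) (hgc.mono hsub)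
      · rw [hint]
        exact hgd.mono (fun x hx => lt_of_lt_of_le hs0pos (le_of_lt hx.1))
      · intro x hx
        rw [hint] at hx
        have hx0 : 0 < x := lt_trans hs0pos hx.1
        have hxr : x ≤ r := le_trans (le_of_lt hx.2) hbr
        rw [hg' x hx0 hxr]
        exact mul_nonneg (hcoef x hx0 hxr) (le_of_lt (hpos x ⟨le_of_lt hx.1, hx.2⟩))
    have hgpos : ∀ x ∈ Set.Icc s0 b, 0 < g x := fun x hx =>
      lt_of_lt_of_le hgs0 (hgmono (Set.left_mem_Icc.mpr (le_of_lt hs0b)) hx hx.1)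
    have hfs : StrictMonoOn f (Set.Icc s0 b) := by
      apply strictMonoOn_of_deriv_pos (convex_Icc s0 b) (hfc.mono hsub)
      intro x hx
      rw [hint] at hx
      exact hgpos x ⟨le_of_lt hx.1, le_of_lt hx.2⟩
    refine ⟨lt_trans hfs0 ?_, hgpos b (Set.right_mem_Icc.mpr (le_of_lt hs0b))⟩
    exact hfs (Set.left_mem_Icc.mpr (le_of_lt hs0b))
      (Set.right_mem_Icc.mpr (le_of_lt hs0b)) hs0b
  -- f is positive on all of [s0, r]
  have hfpos : ∀ x ∈ Set.Icc s0 r, 0 < f x := by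
    by_contra hcon
    push_neg at hcon
    obtain ⟨t, ht, htf⟩ := hcon
    set Z : Set ℝ := {x ∈ Set.Icc s0 r | f x ≤ 0} with hZdef
    have hZne : Z.Nonempty := ⟨t, ht, htf⟩
    have hZbdd : BddBelow Z := ⟨s0, fun x hx => hx.1.1⟩
    have hZclosed : IsClosed Z := by
      have hsub : Set.Icc s0 r ⊆ Set.Ioi 0 := fun x hx => lt_of_lt_of_le hs0pos hx.1
      have : Z = Set.Icc s0 r ∩ f ⁻¹' Set.Iic 0 := by
        ext x; simp [hZdef, Set.mem_sep_iff]
      rw [this]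
      exact (hfc.mono hsub).preimage_isClosed_of_isClosed isClosed_Icc isClosed_Iic
    set t1 := sInf Z with ht1def
    have ht1Z : t1 ∈ Z := hZclosed.csInf_mem hZne hZbdd
    have ht1s0 : s0 < t1 := by
      rcases lt_or_eq_of_le ht1Z.1.1 with h | h
      · exact h
      · exfalso; rw [← h] at ht1Z; linarith [ht1Z.2, hfs0]
    have hpos : ∀ x ∈ Set.Ico s0 t1, 0 < f x := by
      intro x hx
      by_contra hfx
      push_neg at hfx
      have hxZ : x ∈ Z := ⟨⟨hx.1, le_trans (le_of_lt hx.2) ht1Z.1.2⟩, hfx⟩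
      exact absurd (csInf_le hZbdd hxZ) (not_le.mpr hx.2)
    have := (key t1 ht1s0 ht1Z.1.2 hpos).1
    linarith [ht1Z.2]
  -- conclude at r
  have hfinal := key r hs0r (le_refl r) (fun x hx => hfpos x ⟨hx.1, le_of_lt hx.2⟩)
  exact ⟨hfinal.1, hfinal.2⟩
end

section
/- Writing σ_m(r,λ) = j_m(r,λ) r^{-(m+1/2)} for m ≥ 0, there exist constants C, D depending only on the bounded set Λ ⊂ [0,∞) and q_∞ such that |1 - σ_m(r,λ)| ≤ C/(2m+2) and |σ_m'(r,λ)| ≤ D/(2m+2) for all λ ∈ Λ. -/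
open Filter Set MeasureTheory intervalIntegral

set_option maxHeartbeats 1000000 in
private lemma aux
    (q : ℝ → ℝ) (hqm : Measurable q)
    (r B lam ν : ℝ) (hr : 0 < r) (hB : 0 < B)
    (hqB : ∀ s ∈ Set.Ioc (0:ℝ) r, |q s - lam| ≤ B)
    (hν : (1:ℝ)/2 ≤ ν)
    (w : ℝ → ℝ) (hw : ContDiffOn ℝ 2 w (Set.Ioi 0))
    (hode : ∀ s ∈ Set.Ioi (0:ℝ),
      deriv (deriv w) s = (q s - lam + ν*(ν-1)/s^2) * w s)
    (hnorm : Tendsto (fun s => w s / s ^ ν) (nhdsWithin 0 (Set.Ioi 0)) (nhds 1))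
    (hnorm' : Tendsto (fun s => deriv w s / (ν * s ^ (ν-1)))
      (nhdsWithin 0 (Set.Ioi 0)) (nhds 1))
    (n : ℕ) (hn : 2*B*r^2 ≤ n) :
    |(w r * r ^ (-ν)) - 1| ≤ B * 2^n * r^2 / (2*(2*ν+1)) ∧
    |deriv (fun s => w s * s ^ (-ν)) r| ≤ B * 2^n * r / (2*ν+1) := by
  have hν0 : 0 < ν := by linarith
  have h2ν1 : (2:ℝ) ≤ 2*ν + 1 := by linarith
  have h2ν1' : (0:ℝ) < 2*ν + 1 := by linarith
  set σf : ℝ → ℝ := fun s => w s * s ^ (-ν) with hσf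
  set F : ℝ → ℝ := fun s => s ^ ν * deriv w s - ν * s ^ (ν-1) * w s with hF
  -- differentiability
  have hwd : ∀ s ∈ Set.Ioi (0:ℝ), HasDerivAt w (deriv w s) s := by
    intro s hs
    exact ((hw.differentiableOn (by norm_num)).differentiableAt
      (isOpen_Ioi.mem_nhds hs)).hasDerivAt
  have hdw1 : ContDiffOn ℝ 1 (deriv w) (Set.Ioi 0) :=
    hw.deriv_of_isOpen isOpen_Ioi (by norm_num)
  have hwd2 : ∀ s ∈ Set.Ioi (0:ℝ), HasDerivAt (deriv w) (deriv (deriv w) s) s := by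
    intro s hs
    exact ((hdw1.differentiableOn (by norm_num)).differentiableAt
      (isOpen_Ioi.mem_nhds hs)).hasDerivAt
  have hwc : ContinuousOn w (Set.Ioi 0) := hw.continuousOn
  have hdwc : ContinuousOn (deriv w) (Set.Ioi 0) := hdw1.continuousOn
  -- derivative of F
  have hFd : ∀ s ∈ Set.Ioi (0:ℝ), HasDerivAt F (s ^ ν * (q s - lam) * w s) s := by
    intro s hs
    have hs0 : (0:ℝ) < s := hs
    have hsne : s ≠ 0 := ne_of_gt hs0
    have h1 : HasDerivAt (fun t : ℝ => t ^ ν) (ν * s ^ (ν-1)) s :=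
      Real.hasDerivAt_rpow_const (Or.inl hsne)
    have h2 : HasDerivAt (fun t : ℝ => t ^ (ν-1)) ((ν-1) * s ^ (ν-1-1)) s :=
      Real.hasDerivAt_rpow_const (Or.inl hsne)
    have hA : HasDerivAt (fun t => t ^ ν * deriv w t)
        (ν * s ^ (ν-1) * deriv w s + s ^ ν * deriv (deriv w) s) s := h1.mul (hwd2 s hs)
    have hBp : HasDerivAt (fun t => ν * t ^ (ν-1) * w t)
        (ν * ((ν-1) * s ^ (ν-1-1)) * w s + ν * s ^ (ν-1) * deriv w s) s := by
      exact (h2.const_mul ν).mul (hwd s hs)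
    have hsum := hA.sub hBp
    have hpow : s ^ (ν-1-1) = s ^ ν / s ^ 2 := by
      have he : ν - 1 - 1 = ν - ((2:ℕ):ℝ) := by push_cast; ring
      rw [he, Real.rpow_sub hs0, Real.rpow_natCast]
    refine hsum.congr_deriv ?_
    symm
    rw [hode s hs, hpow]
    field_simp
    ring
  -- derivative of σf
  have hσd : ∀ s ∈ Set.Ioi (0:ℝ), HasDerivAt σf (s ^ (-(2*ν)) * F s) s := by
    intro s hs
    have hs0 : (0:ℝ) < s := hs
    have hsne : s ≠ 0 := ne_of_gt hs0
    have h3 : HasDerivAt (fun t : ℝ => t ^ (-ν)) ((-ν) * s ^ (-ν-1)) s :=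
      Real.hasDerivAt_rpow_const (Or.inl hsne)
    have hprod := (hwd s hs).mul h3
    refine hprod.congr_deriv ?_
    symm
    have e1 : s ^ (-(2*ν)) * s ^ ν = s ^ (-ν) := by
      rw [← Real.rpow_add hs0]; congr 1; ring
    have e2 : s ^ (-(2*ν)) * s ^ (ν-1) = s ^ (-ν-1) := by
      rw [← Real.rpow_add hs0]; congr 1; ring
    calc s ^ (-(2*ν)) * F s
        = (s ^ (-(2*ν)) * s ^ ν) * deriv w s - ν * (s ^ (-(2*ν)) * s ^ (ν-1)) * w s := by
          rw [hF]; ring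
      _ = s ^ (-ν) * deriv w s - ν * s ^ (-ν-1) * w s := by rw [e1, e2]
      _ = deriv w s * s ^ (-ν) + w s * (-ν * s ^ (-ν-1)) := by ring
  -- continuity
  have hrpowc : ∀ (p : ℝ), ContinuousOn (fun s : ℝ => s ^ p) (Set.Ioi 0) := by
    intro p
    exact fun x hx => (Real.continuousAt_rpow_const x p (Or.inl (ne_of_gt hx))).continuousWithinAt
  have hFc : ContinuousOn F (Set.Ioi 0) :=
    (((hrpowc ν).mul hdwc).sub (((hrpowc (ν-1)).const_smul ν).mul hwc))
  have hσc : ContinuousOn σf (Set.Ioi 0) := hwc.mul (hrpowc (-ν))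
  -- FTC for F
  have hFTCF : ∀ a t : ℝ, 0 < a → a ≤ t → t ≤ r →
      F t - F a = ∫ s in a..t, s ^ ν * (q s - lam) * w s := by
    intro a t ha hat htr
    have hsub : Set.uIcc a t ⊆ Set.Ioi 0 := by
      rw [Set.uIcc_of_le hat]
      exact fun x hx => lt_of_lt_of_le ha hx.1
    have hsub2 : Set.Ioc a t ⊆ Set.Ioi 0 := fun x hx => lt_trans ha hx.1
    have hint : IntervalIntegrable (fun s => s ^ ν * (q s - lam) * w s) volume a t := by
      rw [intervalIntegrable_iff_integrableOn_Ioc_of_le hat]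
      have hm1 : AEStronglyMeasurable (fun s : ℝ => s ^ ν)
          (volume.restrict (Set.Ioc a t)) :=
        ((hrpowc ν).mono hsub2).aestronglyMeasurable measurableSet_Ioc
      have hm2 : AEStronglyMeasurable (fun s : ℝ => q s - lam)
          (volume.restrict (Set.Ioc a t)) :=
        (hqm.sub measurable_const).aestronglyMeasurable
      have hm3 : AEStronglyMeasurable w (volume.restrict (Set.Ioc a t)) :=
        (hwc.mono hsub2).aestronglyMeasurable measurableSet_Ioc
      obtain ⟨Cb, hCb⟩ := (isCompact_Icc (a := a) (b := t)).exists_bound_of_continuousOn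
        (((hrpowc ν).mono (by rw [← Set.uIcc_of_le hat]; exact hsub)).mul
          (hwc.mono (by rw [← Set.uIcc_of_le hat]; exact hsub)))
      apply Integrable.mono' (g := fun _ => |Cb| * B)
        (integrable_const _) ((hm1.mul hm2).mul hm3)
      · filter_upwards [ae_restrict_mem measurableSet_Ioc] with x hx
        have hx0 : 0 < x := lt_trans ha hx.1
        have hxr : x ∈ Set.Ioc (0:ℝ) r := ⟨hx0, le_trans hx.2 htr⟩
        have h1 : ‖x ^ ν * (q x - lam) * w x‖ = |x ^ ν * w x| * |q x - lam| := by
          rw [Real.norm_eq_abs, ← abs_mul]; congr 1; ring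
        show ‖x ^ ν * (q x - lam) * w x‖ ≤ |Cb| * B
        rw [h1]
        have h2 : |x ^ ν * w x| ≤ |Cb| := by
          refine le_trans ?_ (le_abs_self Cb)
          exact hCb x ⟨le_of_lt hx.1, hx.2⟩
        exact mul_le_mul h2 (hqB x hxr) (abs_nonneg _) (abs_nonneg _)
    exact (intervalIntegral.integral_eq_sub_of_hasDerivAt
      (fun x hx => hFd x (hsub hx)) hint).symm
  -- FTC for σf
  have hFTCσ : ∀ a t : ℝ, 0 < a → a ≤ t → t ≤ r →
      σf t - σf a = ∫ s in a..t, s ^ (-(2*ν)) * F s := by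
    intro a t ha hat htr
    have hsub : Set.uIcc a t ⊆ Set.Ioi 0 := by
      rw [Set.uIcc_of_le hat]
      exact fun x hx => lt_of_lt_of_le ha hx.1
    have hint : IntervalIntegrable (fun s => s ^ (-(2*ν)) * F s) volume a t :=
      (((hrpowc _).mono hsub).mul (hFc.mono hsub)).intervalIntegrable
    exact (intervalIntegral.integral_eq_sub_of_hasDerivAt
      (fun x hx => hσd x (hsub hx)) hint).symm
  -- limits at zero
  have hσlim : Tendsto σf (nhdsWithin 0 (Set.Ioi 0)) (nhds 1) := by
    apply hnorm.congr'
    filter_upwards [self_mem_nhdsWithin] with s hs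
    have hs0 : (0:ℝ) < s := hs
    rw [hσf]
    show w s / s ^ ν = w s * s ^ (-ν)
    rw [Real.rpow_neg (le_of_lt hs0), div_eq_mul_inv]
  have hFlim : Tendsto F (nhdsWithin 0 (Set.Ioi 0)) (nhds 0) := by
    have hD : Tendsto (fun a => ν * |deriv w a / (ν * a ^ (ν-1)) - w a / a ^ ν|)
        (nhdsWithin 0 (Set.Ioi 0)) (nhds 0) := by
      have h0 := ((hnorm'.sub hnorm).abs).const_mul ν
      simpa using h0
    apply squeeze_zero_norm' _ hD
    filter_upwards [Ioo_mem_nhdsGT (zero_lt_one : (0:ℝ) < 1)] with a ha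
    have ha0 : 0 < a := ha.1
    have hane : a ≠ 0 := ne_of_gt ha0
    have hνne : ν ≠ 0 := ne_of_gt hν0
    have hp1 : (0:ℝ) < a ^ (ν-1) := Real.rpow_pos_of_pos ha0 _
    have hp2 : (0:ℝ) < a ^ ν := Real.rpow_pos_of_pos ha0 _
    have e1 : a ^ (2*ν-1) / a ^ (ν-1) = a ^ ν := by
      rw [← Real.rpow_sub ha0]; congr 1; ring
    have e3 : a ^ (2*ν-1) / a ^ ν = a ^ (ν-1) := by
      rw [← Real.rpow_sub ha0]; congr 1; ring
    have key : F a = ν * a ^ (2*ν-1) * (deriv w a / (ν * a ^ (ν-1)) - w a / a ^ ν) := by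
      rw [hF]
      show a ^ ν * deriv w a - ν * a ^ (ν-1) * w a
        = ν * a ^ (2*ν-1) * (deriv w a / (ν * a ^ (ν-1)) - w a / a ^ ν)
      rw [← e1, ← e3]
      field_simp
    have hle1 : a ^ (2*ν-1) ≤ 1 :=
      Real.rpow_le_one (le_of_lt ha0) (le_of_lt ha.2) (by linarith)
    rw [key, Real.norm_eq_abs, abs_mul, abs_mul, abs_of_pos hν0,
      abs_of_pos (Real.rpow_pos_of_pos ha0 (2*ν-1))]
    calc ν * a ^ (2*ν-1) * |deriv w a / (ν * a ^ (ν-1)) - w a / a ^ ν|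
        ≤ ν * 1 * |deriv w a / (ν * a ^ (ν-1)) - w a / a ^ ν| := by
          apply mul_le_mul_of_nonneg_right _ (abs_nonneg _)
          exact mul_le_mul_of_nonneg_left hle1 (le_of_lt hν0)
      _ = ν * |deriv w a / (ν * a ^ (ν-1)) - w a / a ^ ν| := by ring
  -- boundedness on (0, r]
  have hbdd : ∃ M0 : ℝ, ∀ s ∈ Set.Ioc (0:ℝ) r, |σf s| ≤ M0 := by
    have hev : ∀ᶠ s in nhdsWithin 0 (Set.Ioi 0), |σf s - 1| < 1 := by
      have := Metric.tendsto_nhds.mp hσlim 1 zero_lt_one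
      filter_upwards [this] with s hs
      rwa [Real.dist_eq] at hs
    obtain ⟨ε, hε0, hεsub⟩ := Metric.mem_nhdsWithin_iff.mp hev
    set c := min ε r with hc
    have hc0 : 0 < c := lt_min hε0 hr
    obtain ⟨C2, hC2⟩ := (isCompact_Icc (a := c) (b := r)).exists_bound_of_continuousOn
      (hσc.mono (fun x hx => lt_of_lt_of_le hc0 hx.1))
    refine ⟨max 2 C2, fun s hs => ?_⟩
    by_cases hcase : s < ε
    · have h1 : |σf s - 1| < 1 := by
        apply hεsub
        have hb : s ∈ Metric.ball (0:ℝ) ε := by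
          rw [Metric.mem_ball, Real.dist_eq, sub_zero, abs_of_pos hs.1]
          exact hcase
        exact Set.mem_inter hb hs.1
      have : |σf s| ≤ 2 := by
        have := abs_sub_abs_le_abs_sub (σf s) 1
        simp only [abs_one] at this
        linarith
      exact le_trans this (le_max_left _ _)
    · push_neg at hcase
      have : s ∈ Set.Icc c r := ⟨le_trans (min_le_left _ _) hcase, hs.2⟩
      exact le_trans (hC2 s this) (le_max_right _ _)
  -- Lemma A
  have hwσ : ∀ s : ℝ, 0 < s → w s = σf s * s ^ ν := by
    intro s hs0
    have h1 : s ^ (-ν) * s ^ ν = 1 := by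
      rw [← Real.rpow_add hs0]; simp
    rw [hσf]
    show w s = w s * s ^ (-ν) * s ^ ν
    rw [mul_assoc, h1, mul_one]
  have hLemA : ∀ (K y : ℝ), y ≤ r → (∀ s ∈ Set.Ioc (0:ℝ) y, |σf s| ≤ K) →
      ∀ t ∈ Set.Ioc (0:ℝ) y, |F t| ≤ B * K * t ^ (2*ν+1) / (2*ν+1) := by
    intro K y hyr hK t ht
    have hK0 : 0 ≤ K := le_trans (abs_nonneg _) (hK t ht)
    have htr : t ≤ r := le_trans ht.2 hyr
    have main : ∀ a ∈ Set.Ioo (0:ℝ) t,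
        |F t| ≤ |F a| + B * K * t ^ (2*ν+1) / (2*ν+1) := by
      intro a ha
      have hat : a ≤ t := le_of_lt ha.2
      have hftc := hFTCF a t ha.1 hat htr
      have hgint : IntervalIntegrable (fun s : ℝ => B * K * s ^ (2*ν)) volume a t := by
        apply ContinuousOn.intervalIntegrable
        apply continuousOn_const.mul
        apply (hrpowc (2*ν)).mono
        rw [Set.uIcc_of_le hat]
        exact fun x hx => lt_of_lt_of_le ha.1 hx.1
      have hIb : |∫ s in a..t, s ^ ν * (q s - lam) * w s|
          ≤ |∫ s in a..t, B * K * s ^ (2*ν)| := by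
        rw [← Real.norm_eq_abs (∫ s in a..t, s ^ ν * (q s - lam) * w s)]
        apply intervalIntegral.norm_integral_le_abs_of_norm_le _ hgint
        filter_upwards [ae_restrict_mem measurableSet_uIoc] with x hx
        rw [Set.uIoc_of_le hat] at hx
        have hx0 : 0 < x := lt_trans ha.1 hx.1
        have hxy : x ∈ Set.Ioc (0:ℝ) y := ⟨hx0, le_trans hx.2 ht.2⟩
        have hxw : |w x| ≤ K * x ^ ν := by
          rw [hwσ x hx0, abs_mul, abs_of_pos (Real.rpow_pos_of_pos hx0 ν)]
          exact mul_le_mul_of_nonneg_right (hK x hxy)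
            (le_of_lt (Real.rpow_pos_of_pos hx0 ν))
        have hxq : |q x - lam| ≤ B := hqB x ⟨hx0, le_trans hx.2 htr⟩
        have hpos : (0:ℝ) < x ^ ν := Real.rpow_pos_of_pos hx0 ν
        have e2 : x ^ ν * x ^ ν = x ^ (2*ν) := by
          rw [← Real.rpow_add hx0]; congr 1; ring
        calc ‖x ^ ν * (q x - lam) * w x‖
            = x ^ ν * |q x - lam| * |w x| := by
              rw [Real.norm_eq_abs, abs_mul, abs_mul, abs_of_pos hpos]
          _ ≤ x ^ ν * B * (K * x ^ ν) := by
              apply mul_le_mul _ hxw (abs_nonneg _)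
              · positivity
              · exact mul_le_mul_of_nonneg_left hxq (le_of_lt hpos)
          _ = B * K * (x ^ ν * x ^ ν) := by ring
          _ = B * K * x ^ (2*ν) := by rw [e2]
      have hIval : ∫ s in a..t, B * K * s ^ (2*ν)
          = B * K * ((t ^ (2*ν+1) - a ^ (2*ν+1)) / (2*ν+1)) := by
        rw [intervalIntegral.integral_const_mul, integral_rpow (Or.inl (by linarith))]
      have hmono : a ^ (2*ν+1) ≤ t ^ (2*ν+1) :=
        Real.rpow_le_rpow (le_of_lt ha.1) hat (by linarith)
      have ha0 : (0:ℝ) ≤ a ^ (2*ν+1) := Real.rpow_nonneg (le_of_lt ha.1) _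
      calc |F t| = |F a + (F t - F a)| := by ring_nf
        _ ≤ |F a| + |F t - F a| := abs_add_le _ _
        _ = |F a| + |∫ s in a..t, s ^ ν * (q s - lam) * w s| := by rw [hftc]
        _ ≤ |F a| + |∫ s in a..t, B * K * s ^ (2*ν)| := by linarith [hIb]
        _ ≤ |F a| + B * K * t ^ (2*ν+1) / (2*ν+1) := by
            rw [hIval]
            have h1 : B * K * ((t ^ (2*ν+1) - a ^ (2*ν+1)) / (2*ν+1))
                ≤ B * K * t ^ (2*ν+1) / (2*ν+1) := by
              rw [mul_div_assoc]
              gcongr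
              linarith
            have h2 : 0 ≤ B * K * ((t ^ (2*ν+1) - a ^ (2*ν+1)) / (2*ν+1)) := by
              apply mul_nonneg (by positivity)
              apply div_nonneg (by linarith) (le_of_lt h2ν1')
            rw [abs_of_nonneg h2]
            linarith
    have htend : Tendsto (fun a => |F a| + B * K * t ^ (2*ν+1) / (2*ν+1))
        (nhdsWithin 0 (Set.Ioi 0)) (nhds (0 + B * K * t ^ (2*ν+1) / (2*ν+1))) := by
      apply Tendsto.add_const
      have := hFlim.abs
      simpa using this
    rw [zero_add] at htend
    apply ge_of_tendsto htend
    filter_upwards [Ioo_mem_nhdsGT ht.1] with a ha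
    exact main a ha
  -- Lemma B (incremental, positive base point)
  have hLemBx : ∀ (K y : ℝ), y ≤ r → (∀ s ∈ Set.Ioc (0:ℝ) y, |σf s| ≤ K) →
      ∀ x s : ℝ, 0 < x → x ≤ s → s ≤ y →
      |σf s - σf x| ≤ B * K * (s^2 - x^2) / (2*(2*ν+1)) := by
    intro K y hyr hK x s hx hxs hsy
    have hsr : s ≤ r := le_trans hsy hyr
    have hK0 : 0 ≤ K := le_trans (abs_nonneg _)
      (hK s ⟨lt_of_lt_of_le hx hxs, hsy⟩)
    have hftc := hFTCσ x s hx hxs hsr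
    have hgint : IntervalIntegrable (fun t : ℝ => B * K / (2*ν+1) * t) volume x s :=
      (continuousOn_const.mul continuousOn_id).intervalIntegrable
    have hIb : |σf s - σf x| ≤ |∫ t in x..s, B * K / (2*ν+1) * t| := by
      rw [hftc, ← Real.norm_eq_abs (∫ t in x..s, t ^ (-(2*ν)) * F t)]
      apply intervalIntegral.norm_integral_le_abs_of_norm_le _ hgint
      filter_upwards [ae_restrict_mem measurableSet_uIoc] with u hu
      rw [Set.uIoc_of_le hxs] at hu
      have hu0 : 0 < u := lt_trans hx hu.1
      have hFu : |F u| ≤ B * K * u ^ (2*ν+1) / (2*ν+1) :=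
        hLemA K y hyr hK u ⟨hu0, le_trans hu.2 hsy⟩
      have hup : (0:ℝ) < u ^ (-(2*ν)) := Real.rpow_pos_of_pos hu0 _
      have e1 : u ^ (-(2*ν)) * u ^ (2*ν+1) = u := by
        rw [← Real.rpow_add hu0]
        have : -(2*ν) + (2*ν+1) = 1 := by ring
        rw [this, Real.rpow_one]
      calc ‖u ^ (-(2*ν)) * F u‖ = u ^ (-(2*ν)) * |F u| := by
            rw [Real.norm_eq_abs, abs_mul, abs_of_pos hup]
        _ ≤ u ^ (-(2*ν)) * (B * K * u ^ (2*ν+1) / (2*ν+1)) :=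
            mul_le_mul_of_nonneg_left hFu (le_of_lt hup)
        _ = B * K / (2*ν+1) * (u ^ (-(2*ν)) * u ^ (2*ν+1)) := by ring
        _ = B * K / (2*ν+1) * u := by rw [e1]
    have hIval : ∫ t in x..s, B * K / (2*ν+1) * t
        = B * K / (2*ν+1) * ((s^2 - x^2) / 2) := by
      rw [intervalIntegral.integral_const_mul, integral_id]
    rw [hIval] at hIb
    have h0 : (0:ℝ) ≤ B * K / (2*ν+1) * ((s^2 - x^2) / 2) := by
      apply mul_nonneg (by positivity)
      have : x^2 ≤ s^2 := by nlinarith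
      linarith
    rw [abs_of_nonneg h0] at hIb
    calc |σf s - σf x| ≤ B * K / (2*ν+1) * ((s^2 - x^2) / 2) := hIb
      _ = B * K * (s^2 - x^2) / (2*(2*ν+1)) := by
          rw [div_mul_div_comm, mul_comm (2*ν+1) 2]
  -- Lemma B (base at zero)
  have hLemB0 : ∀ (K y : ℝ), y ≤ r → (∀ s ∈ Set.Ioc (0:ℝ) y, |σf s| ≤ K) →
      ∀ s ∈ Set.Ioc (0:ℝ) y, |σf s - 1| ≤ B * K * s^2 / (2*(2*ν+1)) := by
    intro K y hyr hK s hs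
    have hK0 : 0 ≤ K := le_trans (abs_nonneg _) (hK s hs)
    have main : ∀ a ∈ Set.Ioo (0:ℝ) s,
        |σf s - 1| ≤ |σf a - 1| + B * K * s^2 / (2*(2*ν+1)) := by
      intro a ha
      have h1 := hLemBx K y hyr hK a s ha.1 (le_of_lt ha.2) hs.2
      have h2 : B * K * (s^2 - a^2) / (2*(2*ν+1)) ≤ B * K * s^2 / (2*(2*ν+1)) := by
        gcongr
        nlinarith [ha.1]
      calc |σf s - 1| = |(σf s - σf a) + (σf a - 1)| := by ring_nf
        _ ≤ |σf s - σf a| + |σf a - 1| := abs_add_le _ _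
        _ ≤ |σf a - 1| + B * K * s^2 / (2*(2*ν+1)) := by linarith
    have htend : Tendsto (fun a => |σf a - 1| + B * K * s^2 / (2*(2*ν+1)))
        (nhdsWithin 0 (Set.Ioi 0)) (nhds (0 + B * K * s^2 / (2*(2*ν+1)))) := by
      apply Tendsto.add_const
      have h3 : Tendsto (fun a => σf a - 1) (nhdsWithin 0 (Set.Ioi 0)) (nhds 0) := by
        have := hσlim.sub_const 1
        simpa using this
      have := h3.abs
      simpa using this
    rw [zero_add] at htend
    apply ge_of_tendsto htend
    filter_upwards [Ioo_mem_nhdsGT hs.1] with a ha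
    exact main a ha
  -- uniform bound by induction
  have hM : ∀ s ∈ Set.Ioc (0:ℝ) r, |σf s| ≤ 2^n := by
    have hnpos : 0 < n := by
      rcases Nat.eq_zero_or_pos n with h0 | h; swap
      · exact h
      · exfalso
        rw [h0] at hn
        push_cast at hn
        have : (0:ℝ) < B * r^2 := by positivity
        linarith
    have hncast : (0:ℝ) < n := by exact_mod_cast hnpos
    set Δ := r / n with hΔdef
    have hΔ0 : 0 < Δ := div_pos hr hncast
    have hBrΔ : B * r * Δ ≤ 1/2 := by
      rw [hΔdef, show B*r*(r/(n:ℝ)) = (B*r^2)/(n:ℝ) by field_simp,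
        div_le_iff₀ hncast]
      linarith
    obtain ⟨M0, hM0⟩ := hbdd
    have key : ∀ i : ℕ, ∀ s ∈ Set.Ioc (0:ℝ) r, s ≤ (i:ℝ) * Δ → |σf s| ≤ 2^i := by
      intro i
      induction i with
      | zero =>
        intro s hs hsle
        exfalso
        simp only [Nat.cast_zero, zero_mul] at hsle
        linarith [hs.1]
      | succ i ih =>
        intro s hs hsle
        set y := min (((i:ℝ)+1) * Δ) r with hy
        have hy0 : 0 < y := lt_min (by positivity) hr
        have hyr : y ≤ r := min_le_right _ _
        set N := sSup ((fun u => |σf u|) '' Set.Ioc 0 y) with hN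
        have hNe : ((fun u => |σf u|) '' Set.Ioc 0 y).Nonempty :=
          ⟨|σf y|, ⟨y, ⟨hy0, le_rfl⟩, rfl⟩⟩
        have hbddN : BddAbove ((fun u => |σf u|) '' Set.Ioc 0 y) := by
          refine ⟨M0, fun v hv => ?_⟩
          obtain ⟨u, hu, huv⟩ := hv
          exact huv ▸ hM0 u ⟨hu.1, le_trans hu.2 hyr⟩
        have hNle : ∀ u ∈ Set.Ioc (0:ℝ) y, |σf u| ≤ N :=
          fun u hu => le_csSup hbddN ⟨u, hu, rfl⟩
        have hN0 : 0 ≤ N := le_trans (abs_nonneg _) (hNle y ⟨hy0, le_rfl⟩)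
        have step : ∀ u ∈ Set.Ioc (0:ℝ) y, |σf u| ≤ 2^i + N/2 := by
          intro u hu
          by_cases hcase : u ≤ (i:ℝ) * Δ
          · have := ih u ⟨hu.1, le_trans hu.2 hyr⟩ hcase
            linarith
          · push_neg at hcase
            rcases Nat.eq_zero_or_pos i with hi0 | hipos
            · subst hi0
              have hB0 := hLemB0 N y hyr hNle u hu
              have huΔ : u ≤ Δ := by
                have := hu.2
                rw [hy] at this
                simp only [Nat.cast_zero, zero_add, one_mul] at this
                exact le_trans this (min_le_left _ _)
              have hur : u ≤ r := le_trans hu.2 hyr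
              have hu2 : u^2 ≤ Δ * r := by
                nlinarith [mul_le_mul_of_nonneg_right huΔ (le_of_lt hu.1),
                  mul_le_mul_of_nonneg_left hur (le_of_lt hΔ0)]
              have hnum : B * N * u^2 ≤ N/2 := by
                calc B * N * u^2 ≤ B * N * (Δ * r) := by
                      apply mul_le_mul_of_nonneg_left hu2 (by positivity)
                  _ = N * (B * r * Δ) := by ring
                  _ ≤ N * (1/2) := mul_le_mul_of_nonneg_left hBrΔ hN0
                  _ = N/2 := by ring
              have hquot : B * N * u^2 / (2*(2*ν+1)) ≤ N/2 := by
                have hd1 : (1:ℝ) ≤ 2*(2*ν+1) := by linarith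
                have hnn : 0 ≤ B * N * u^2 := by positivity
                calc B * N * u^2 / (2*(2*ν+1)) ≤ B * N * u^2 / 1 := by
                      apply div_le_div_of_nonneg_left hnn (by linarith) ?_
                      · linarith
                  _ = B * N * u^2 := by ring
                  _ ≤ N/2 := hnum
              have : |σf u| ≤ |σf u - 1| + 1 := by
                have := abs_add_le (σf u - 1) 1
                simpa using this
              have hfin : |σf u| ≤ 1 + N/2 := by linarith [le_trans hB0 hquot]
              simpa using hfin
            · have hipos' : (0:ℝ) < (i:ℝ) * Δ := by
                have : (0:ℝ) < (i:ℝ) := by exact_mod_cast hipos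
                positivity
              have hxu : (i:ℝ) * Δ < u := hcase
              have hxr : (i:ℝ) * Δ ≤ r :=
                le_of_lt (lt_of_lt_of_le hxu (le_trans hu.2 hyr))
              have hIH : |σf ((i:ℝ) * Δ)| ≤ 2^i :=
                ih ((i:ℝ) * Δ) ⟨hipos', hxr⟩ le_rfl
              have hBx := hLemBx N y hyr hNle ((i:ℝ)*Δ) u hipos' (le_of_lt hxu) hu.2
              have hdiff : u^2 - ((i:ℝ)*Δ)^2 ≤ 2*r*Δ := by
                have h1 : u - (i:ℝ)*Δ ≤ Δ := by
                  have := le_trans hu.2 (min_le_left _ _)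
                  nlinarith
                have h2 : u + (i:ℝ)*Δ ≤ 2*r := by
                  have hur : u ≤ r := le_trans hu.2 hyr
                  linarith [hxr, hur]
                nlinarith [hipos', hu.1]
              have hnum : B * N * (u^2 - ((i:ℝ)*Δ)^2) ≤ N := by
                calc B * N * (u^2 - ((i:ℝ)*Δ)^2) ≤ B * N * (2*r*Δ) := by
                      apply mul_le_mul_of_nonneg_left hdiff (by positivity)
                  _ = 2 * N * (B * r * Δ) := by ring
                  _ ≤ 2 * N * (1/2) := by
                      apply mul_le_mul_of_nonneg_left hBrΔ (by positivity)
                  _ = N := by ring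
              have hquot : B * N * (u^2 - ((i:ℝ)*Δ)^2) / (2*(2*ν+1)) ≤ N/2 := by
                rw [div_le_iff₀ (by linarith : (0:ℝ) < 2*(2*ν+1))]
                nlinarith [hN0]
              have hre : σf ((i:ℝ)*Δ) + (σf u - σf ((i:ℝ)*Δ)) = σf u := by ring
              calc |σf u| = |σf ((i:ℝ)*Δ) + (σf u - σf ((i:ℝ)*Δ))| := by rw [hre]
                _ ≤ |σf ((i:ℝ)*Δ)| + |σf u - σf ((i:ℝ)*Δ)| := abs_add_le _ _
                _ ≤ 2^i + N/2 := by linarith [le_trans hBx hquot]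
        have hNle2 : N ≤ 2^i + N/2 := by
          apply csSup_le hNe
          rintro v ⟨u, hu, rfl⟩
          exact step u hu
        have hN2 : N ≤ 2^(i+1) := by
          have : (2:ℝ)^(i+1) = 2 * 2^i := by rw [pow_succ]; ring
          linarith
        have hsy : s ≤ y := by
          apply le_min _ hs.2
          push_cast at hsle ⊢
          exact hsle
        exact le_trans (hNle s ⟨hs.1, hsy⟩) hN2
    intro s hs
    apply key n s hs
    have : (n:ℝ) * Δ = r := by
      rw [hΔdef]
      field_simp
    rw [this]
    exact hs.2
  constructor
  · have := hLemB0 (2^n) r le_rfl hM r ⟨hr, le_rfl⟩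
    calc |w r * r ^ (-ν) - 1| = |σf r - 1| := rfl
      _ ≤ B * 2^n * r^2 / (2*(2*ν+1)) := this
      _ ≤ B * 2^n * r^2 / (2*(2*ν+1)) := le_rfl
  · have hd := (hσd r hr).deriv
    rw [hd]
    have hFr : |F r| ≤ B * 2^n * r ^ (2*ν+1) / (2*ν+1) :=
      hLemA (2^n) r le_rfl hM r ⟨hr, le_rfl⟩
    have hrν : (0:ℝ) < r ^ (-(2*ν)) := Real.rpow_pos_of_pos hr _
    rw [abs_mul, abs_of_pos hrν]
    have h1 : r ^ (-(2*ν)) * r ^ (2*ν+1) = r := by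
      rw [← Real.rpow_add hr]
      have he : -(2*ν) + (2*ν+1) = 1 := by ring
      rw [he, Real.rpow_one]
    have key : r ^ (-(2*ν)) * (B * 2^n * r ^ (2*ν+1) / (2*ν+1)) = B * 2^n * r / (2*ν+1) := by
      calc r ^ (-(2*ν)) * (B * 2^n * r ^ (2*ν+1) / (2*ν+1))
          = B * 2^n * (r ^ (-(2*ν)) * r ^ (2*ν+1)) / (2*ν+1) := by ring
        _ = B * 2^n * r / (2*ν+1) := by rw [h1]
    calc r ^ (-(2*ν)) * |F r| ≤ r ^ (-(2*ν)) * (B * 2^n * r ^ (2*ν+1) / (2*ν+1)) := by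
          apply mul_le_mul_of_nonneg_left hFr (le_of_lt hrν)
      _ = B * 2^n * r / (2*ν+1) := key

/-- Uniform estimates `|1 - σ_m(r,λ)| ≤ C/(2m+2)` and `|σ_m'(r,λ)| ≤ D/(2m+2)` for
`σ_m(r,λ) = j_m(r,λ) r^{-(m+1/2)}`, with constants depending only on `Λ` and `q_∞`
(proof of Lemma 3.3 of the paper). -/
theorem stmt8
    (q : ℝ → ℝ) (hqm : Measurable q) (hq0 : ∀ r, 0 ≤ q r)
    (qinf : ℝ) (hqinf : qinf = sSup (q '' Set.Ici 0))
    (hqbdd : BddAbove (q '' Set.Ici 0))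
    (j : ℤ → ℝ → ℝ → ℝ)
    (hjs : ∀ (m : ℤ) (lam : ℝ), ContDiffOn ℝ 2 (fun s => j m s lam) (Set.Ioi 0))
    (hode : ∀ (m : ℤ) (lam : ℝ), ∀ s ∈ Set.Ioi (0:ℝ),
      deriv (deriv (fun t => j m t lam)) s
        + (lam - q s - ((m:ℝ) ^ 2 - 1/4) / s ^ 2) * j m s lam = 0)
    (hnorm : ∀ (m : ℤ) (lam : ℝ),
      Tendsto (fun s : ℝ => j m s lam / s ^ ((|m| : ℝ) + 1/2))
        (nhdsWithin 0 (Set.Ioi 0)) (nhds 1))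
    (hnorm' : ∀ (m : ℤ) (lam : ℝ),
      Tendsto (fun s : ℝ => deriv (fun t => j m t lam) s /
          (((|m| : ℝ) + 1/2) * s ^ ((|m| : ℝ) - 1/2)))
        (nhdsWithin 0 (Set.Ioi 0)) (nhds 1))
    (r : ℝ) (hr : 0 < r)
    (Λ : Set ℝ) (hΛ : Λ ⊆ Set.Ici 0) (hΛb : Bornology.IsBounded Λ)
    (σ : ℕ → ℝ → ℝ → ℝ)
    (hσ : ∀ (m : ℕ) (s : ℝ) (lam : ℝ), σ m s lam = j m s lam * s ^ (-((m:ℝ) + 1/2))) :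
    ∃ C D : ℝ, ∀ m : ℕ, ∀ lam ∈ Λ,
      |1 - σ m r lam| ≤ C / (2 * (m:ℝ) + 2) ∧
      |deriv (fun s => σ m s lam) r| ≤ D / (2 * (m:ℝ) + 2) := by
  -- bound on q
  have hqle : ∀ s : ℝ, 0 ≤ s → q s ≤ qinf := by
    intro s hs
    rw [hqinf]
    exact le_csSup hqbdd ⟨s, hs, rfl⟩
  have hqinf0 : 0 ≤ qinf := le_trans (hq0 0) (hqle 0 le_rfl)
  -- bound on Λ
  obtain ⟨L, hL⟩ : BddAbove Λ := hΛb.bddAbove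
  set B : ℝ := qinf + max L 0 + 1 with hBdef
  have hB : 0 < B := by
    have : (0:ℝ) ≤ max L 0 := le_max_right _ _
    rw [hBdef]; linarith
  set n : ℕ := ⌈2*B*r^2⌉₊ with hndef
  have hn : 2*B*r^2 ≤ (n:ℝ) := Nat.le_ceil _
  refine ⟨B * 2^n * r^2 / 2, B * 2^n * r, ?_⟩
  intro m lam hlam
  have hlam0 : 0 ≤ lam := hΛ hlam
  have hlamL : lam ≤ max L 0 := le_trans (hL hlam) (le_max_left _ _)
  have hqB : ∀ s ∈ Set.Ioc (0:ℝ) r, |q s - lam| ≤ B := by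
    intro s hs
    rw [abs_sub_le_iff]
    constructor
    · have := hqle s (le_of_lt hs.1)
      rw [hBdef]
      have : (0:ℝ) ≤ max L 0 := le_max_right _ _
      linarith [hqle s (le_of_lt hs.1)]
    · rw [hBdef]
      linarith [hq0 s]
  set ν : ℝ := (m:ℝ) + 1/2 with hνdef
  have hν : (1:ℝ)/2 ≤ ν := by
    rw [hνdef]
    have : (0:ℝ) ≤ (m:ℝ) := Nat.cast_nonneg m
    linarith
  set w : ℝ → ℝ := fun s => j (m:ℤ) s lam with hwdef
  have hw : ContDiffOn ℝ 2 w (Set.Ioi 0) := hjs (m:ℤ) lam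
  have hodew : ∀ s ∈ Set.Ioi (0:ℝ),
      deriv (deriv w) s = (q s - lam + ν*(ν-1)/s^2) * w s := by
    intro s hs
    have h1 := hode (m:ℤ) lam s hs
    push_cast at h1
    have hc : ν*(ν-1) = (m:ℝ)^2 - 1/4 := by rw [hνdef]; ring
    rw [hc]
    have h2 : deriv (deriv w) s = deriv (deriv (fun t => j (m:ℤ) t lam)) s := rfl
    rw [h2]
    linarith [h1, mul_comm (lam - q s - ((m:ℝ)^2 - 1/4)/s^2) (j (m:ℤ) s lam)]
  have hnormw : Tendsto (fun s => w s / s ^ ν) (nhdsWithin 0 (Set.Ioi 0)) (nhds 1) := by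
    have := hnorm (m:ℤ) lam
    simp only [Int.cast_natCast, Nat.abs_cast] at this
    exact this
  have hnormw' : Tendsto (fun s => deriv w s / (ν * s ^ (ν-1)))
      (nhdsWithin 0 (Set.Ioi 0)) (nhds 1) := by
    have := hnorm' (m:ℤ) lam
    simp only [Int.cast_natCast, Nat.abs_cast] at this
    have he : (m:ℝ) - 1/2 = ν - 1 := by rw [hνdef]; ring
    rw [he] at this
    exact this
  obtain ⟨hc1, hc2⟩ := aux q hqm r B lam ν hr hB hqB hν w hw hodew hnormw hnormw' n hn
  have hσr : σ m r lam = w r * r ^ (-ν) := by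
    rw [hσ m r lam, hνdef]
  have h2ν : 2*ν + 1 = 2*(m:ℝ) + 2 := by rw [hνdef]; ring
  constructor
  · rw [abs_sub_comm, hσr]
    calc |w r * r ^ (-ν) - 1| ≤ B * 2^n * r^2 / (2*(2*ν+1)) := hc1
      _ = B * 2^n * r^2 / 2 / (2*(m:ℝ)+2) := by
          rw [h2ν, div_div]
  · have hfun : (fun s => σ m s lam) = (fun s => w s * s ^ (-ν)) := by
      funext s
      rw [hσ m s lam, hνdef]
    rw [hfun]
    calc |deriv (fun s => w s * s ^ (-ν)) r| ≤ B * 2^n * r / (2*ν+1) := hc2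
      _ = B * 2^n * r / (2*(m:ℝ)+2) := by rw [h2ν]
end

section
/- If g₁, g₂ are meromorphic functions on ℂ, not both identically zero, and (t_n) is a sequence of nonzero complex numbers with t_n → 0 such that g₁(t_n) + g₂(t_n) ln t_n = 0 for all n, then a contradiction arises; consequently no such sequence of zeros accumulating at 0 exists unless g₁ ≡ g₂ ≡ 0. -/
open Filter

private lemma normlog_le_aux (z : ℂ) : ‖Complex.log z‖ ≤ |Real.log ‖z‖| + Real.pi := by
  calc ‖Complex.log z‖ ≤ |(Complex.log z).re| + |(Complex.log z).im| :=
        Complex.norm_le_abs_re_add_abs_im _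
    _ ≤ |Real.log ‖z‖| + Real.pi := by
        rw [Complex.log_re, Complex.log_im]
        exact add_le_add le_rfl (Complex.abs_arg_le_pi z)

private lemma re_le_normlog_aux (z : ℂ) : |Real.log ‖z‖| ≤ ‖Complex.log z‖ := by
  have := Complex.abs_re_le_norm (Complex.log z)
  rw [Complex.log_re] at this
  simpa using this

/-- If `g₁, g₂` are meromorphic on `ℂ` and not both identically zero (near `0`), then
there is no sequence `t_n → 0` of nonzero points with `g₁(t_n) + g₂(t_n) log t_n = 0`
(argument from the proof of Lemma 6.2 of the paper). -/
theorem stmt13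
    (g1 g2 : ℂ → ℂ)
    (hg1 : MeromorphicOn g1 Set.univ) (hg2 : MeromorphicOn g2 Set.univ)
    (hnz : ¬ (g1 =ᶠ[nhdsWithin 0 {(0:ℂ)}ᶜ] 0 ∧ g2 =ᶠ[nhdsWithin 0 {(0:ℂ)}ᶜ] 0))
    (t : ℕ → ℂ) (ht0 : ∀ n, t n ≠ 0)
    (htl : Tendsto t atTop (nhds 0))
    (heq : ∀ n, g1 (t n) + g2 (t n) * Complex.log (t n) = 0) :
    False := by
  have hm1 : MeromorphicAt g1 0 := hg1 0 (Set.mem_univ 0)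
  have hm2 : MeromorphicAt g2 0 := hg2 0 (Set.mem_univ 0)
  have ht' : Tendsto t atTop (nhdsWithin 0 {(0:ℂ)}ᶜ) := by
    rw [tendsto_nhdsWithin_iff]
    exact ⟨htl, Eventually.of_forall fun n => by simpa using ht0 n⟩
  have hnorm0 : Tendsto (fun n => ‖t n‖) atTop (nhds 0) := by simpa using htl.norm
  have hx : Tendsto (fun n => ‖t n‖) atTop (nhdsWithin 0 (Set.Ioi 0)) := by
    rw [tendsto_nhdsWithin_iff]
    exact ⟨hnorm0, Eventually.of_forall fun n => by
      simpa [Set.mem_Ioi] using norm_pos_iff.mpr (ht0 n)⟩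
  -- ‖log (t n)‖ → ∞
  have hlogTop : Tendsto (fun n => ‖Complex.log (t n)‖) atTop atTop := by
    apply tendsto_atTop_mono (fun n => re_le_normlog_aux (t n))
    exact tendsto_abs_atBot_atTop.comp (Real.tendsto_log_nhdsGT_zero.comp hx)
  -- t^k · log t → 0 for k ≥ 1
  have hsmall : ∀ k : ℕ, 1 ≤ k →
      Tendsto (fun n => t n ^ k * Complex.log (t n)) atTop (nhds 0) := by
    intro k hk
    have hxlog : Tendsto (fun n => Real.log ‖t n‖ * ‖t n‖) atTop (nhds 0) := by
      have := (tendsto_log_mul_rpow_nhdsGT_zero zero_lt_one).comp hx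
      simpa [Real.rpow_one, Function.comp_def] using this
    have hpi : Tendsto (fun n => ‖t n‖ * Real.pi) atTop (nhds 0) := by
      simpa using hnorm0.mul_const Real.pi
    have hlt1 : ∀ᶠ n in atTop, ‖t n‖ < 1 := hnorm0.eventually_lt_const one_pos
    have hb : Tendsto (fun n => -(Real.log ‖t n‖ * ‖t n‖) + ‖t n‖ * Real.pi) atTop (nhds 0) := by
      simpa using (hxlog.neg.add hpi)
    apply squeeze_zero_norm' _ hb
    filter_upwards [hlt1] with n h1
    have h0 : (0:ℝ) < ‖t n‖ := norm_pos_iff.mpr (ht0 n)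
    have hlogneg : Real.log ‖t n‖ < 0 := Real.log_neg h0 h1
    have hb1 : ‖t n ^ k * Complex.log (t n)‖ = ‖t n‖ ^ k * ‖Complex.log (t n)‖ := by
      rw [norm_mul, norm_pow]
    have hpk : ‖t n‖ ^ k ≤ ‖t n‖ := by
      simpa using pow_le_pow_of_le_one h0.le h1.le hk
    calc ‖t n ^ k * Complex.log (t n)‖ = ‖t n‖ ^ k * ‖Complex.log (t n)‖ := hb1
      _ ≤ ‖t n‖ * ‖Complex.log (t n)‖ :=
          mul_le_mul_of_nonneg_right hpk (norm_nonneg _)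
      _ ≤ ‖t n‖ * (|Real.log ‖t n‖| + Real.pi) :=
          mul_le_mul_of_nonneg_left (normlog_le_aux _) h0.le
      _ = -(Real.log ‖t n‖ * ‖t n‖) + ‖t n‖ * Real.pi := by
          rw [abs_of_neg hlogneg]; ring
  by_cases hz2 : g2 =ᶠ[nhdsWithin 0 {(0:ℂ)}ᶜ] 0
  · -- Case 1 : g2 ≡ 0 near 0; then g1 vanishes on the sequence, hence g1 ≡ 0 near 0.
    have hg1z : ∀ᶠ n in atTop, g1 (t n) = 0 := by
      filter_upwards [ht'.eventually hz2] with n h2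
      have := heq n
      rw [h2] at this; simpa using this
    by_cases ho1 : meromorphicOrderAt g1 0 = ⊤
    · exact hnz ⟨meromorphicOrderAt_eq_top_iff.mp ho1, hz2⟩
    · obtain ⟨m1, hm1o⟩ := WithTop.ne_top_iff_exists.mp ho1
      obtain ⟨w, hw_an, hw0, hw_eq⟩ := (meromorphicOrderAt_eq_int_iff hm1 (n := m1)).mp hm1o.symm
      have hwz : ∀ᶠ n in atTop, w (t n) = 0 := by
        filter_upwards [ht'.eventually hw_eq, hg1z] with n hwe hz
        rw [hz] at hwe
        have htm : (t n - 0) ^ m1 ≠ 0 := zpow_ne_zero _ (by simpa using ht0 n)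
        have := (smul_eq_zero.mp hwe.symm).resolve_left htm
        exact this
      have hwt : Tendsto (fun n => w (t n)) atTop (nhds (w 0)) :=
        (hw_an.continuousAt.tendsto).comp htl
      exact hw0 (tendsto_nhds_unique ((tendsto_congr' hwz).mp hwt) tendsto_const_nhds)
  · -- Case 2 : g2 ≢ 0 near 0.
    have ho2 : meromorphicOrderAt g2 0 ≠ ⊤ := fun h => hz2 (meromorphicOrderAt_eq_top_iff.mp h)
    obtain ⟨m2, hm2o⟩ := WithTop.ne_top_iff_exists.mp ho2
    obtain ⟨u, hu_an, hu0, hu_eq⟩ := (meromorphicOrderAt_eq_int_iff hm2 (n := m2)).mp hm2o.symm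
    have hune : ∀ᶠ n in atTop, u (t n) ≠ 0 :=
      htl.eventually (hu_an.continuousAt.eventually_ne hu0)
    have hg2ne : ∀ᶠ n in atTop, g2 (t n) ≠ 0 := by
      filter_upwards [ht'.eventually hu_eq, hune] with n hue hun
      rw [hue]
      exact mul_ne_zero (zpow_ne_zero _ (by simpa using ht0 n)) hun
    have hdiv : ∀ᶠ n in atTop, (g1 / g2) (t n) = -Complex.log (t n) := by
      filter_upwards [hg2ne] with n h2
      simp only [Pi.div_apply]
      field_simp
      linear_combination heq n
    have hh : MeromorphicAt (g1 / g2) 0 := hm1.div hm2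
    by_cases ho : meromorphicOrderAt (g1 / g2) 0 = ⊤
    · have hev := ht'.eventually (meromorphicOrderAt_eq_top_iff.mp ho)
      have : ∀ᶠ n in atTop, ‖Complex.log (t n)‖ = 0 := by
        filter_upwards [hev, hdiv] with n h1 h2
        rw [h1] at h2
        have hl0 : Complex.log (t n) = 0 := by linear_combination h2
        simp [hl0]
      have h1 := hlogTop.eventually_ge_atTop 1
      obtain ⟨n, hn1, hn0⟩ := (h1.and this).exists
      rw [hn0] at hn1; linarith
    · obtain ⟨m, hmo⟩ := WithTop.ne_top_iff_exists.mp ho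
      obtain ⟨v, hv_an, hv0, hv_eq⟩ := (meromorphicOrderAt_eq_int_iff hh (n := m)).mp hmo.symm
      have hvt : Tendsto (fun n => v (t n)) atTop (nhds (v 0)) :=
        (hv_an.continuousAt.tendsto).comp htl
      have hseq : ∀ᶠ n in atTop, -Complex.log (t n) = t n ^ m * v (t n) := by
        filter_upwards [ht'.eventually hv_eq, hdiv] with n h1 h2
        rw [← h2, h1]
        simp [smul_eq_mul]
      rcases le_or_gt 0 m with hm | hm
      · -- g1/g2 analytic near 0 ⇒ log bounded, contradiction
        set k := m.toNat with hkdef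
        have hmk : (m : ℤ) = (k : ℤ) := (Int.toNat_of_nonneg hm).symm
        have hR : Tendsto (fun n => t n ^ m * v (t n)) atTop (nhds ((0:ℂ) ^ k * v 0)) := by
          have : Tendsto (fun n => t n ^ k * v (t n)) atTop (nhds ((0:ℂ) ^ k * v 0)) :=
            ((htl.pow k)).mul hvt
          refine this.congr fun n => ?_
          rw [hmk, zpow_natCast]
        have hlogt : Tendsto (fun n => Complex.log (t n)) atTop
            (nhds (-((0:ℂ) ^ k * v 0))) := by
          have := (hR.congr' (hseq.mono fun n h => h.symm)).neg
          simpa using this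
        exact not_tendsto_atTop_of_tendsto_nhds hlogt.norm hlogTop
      · -- pole: t^k · log t → 0 but equals v(t n) → v 0 ≠ 0
        set k := (-m).toNat with hkdef
        have hk1 : 1 ≤ k := by omega
        have hmk : m = -(k : ℤ) := by omega
        have hveq : ∀ᶠ n in atTop, v (t n) = -(t n ^ k * Complex.log (t n)) := by
          filter_upwards [hseq] with n h
          have htn : t n ≠ 0 := ht0 n
          rw [hmk] at h
          rw [zpow_neg, zpow_natCast] at h
          field_simp at h ⊢
          linear_combination -h
        have hv_to_zero : Tendsto (fun n => v (t n)) atTop (nhds 0) := by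
          have := (hsmall k hk1).neg
          simpa using (this.congr' (hveq.mono fun n h => h.symm))
        exact hv0 (tendsto_nhds_unique hvt hv_to_zero)
end

section
/- For |m| ≥ 1 and λ ≤ d², the function k_m(r,λ) = √r K_m(√(d²-λ) r) satisfies k_m'(r,λ) < 0 for all r > 0; consequently the equation j_m'(R,λ)/j_m(R,λ) = k_m'(R,λ)/k_m(R,λ) has no solution when j_m'(R,λ)/j_m(R,λ) > 0. -/
open Filter

/-- For `|m| ≥ 1` and `λ ≤ d²` the function `k_m(r,λ) = √r K_m(√(d²-λ) r)` satisfies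
`k_m'(r,λ) < 0` for all `r > 0`; hence `j_m'(R,λ)/j_m(R,λ) = k_m'(R,λ)/k_m(R,λ)` is
impossible when the left-hand side is positive (proof of Theorem 8.3 of the paper). -/
theorem stmt17
    (m : ℤ) (hm : 1 ≤ |m|) (d lam R : ℝ) (hd : 0 < d) (hR : 0 < R) (hlam : lam ≤ d ^ 2)
    (km : ℝ → ℝ) (hks : ContDiffOn ℝ 2 km (Set.Ioi 0))
    (hkode : ∀ r ∈ Set.Ioi (0:ℝ),
      deriv (deriv km) r = (d ^ 2 - lam + ((m:ℝ) ^ 2 - 1/4) / r ^ 2) * km r)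
    (hkpos : ∀ r ∈ Set.Ioi (0:ℝ), 0 < km r)
    (hk' : ∀ᶠ r in atTop, deriv km r < 0) :
    (∀ r ∈ Set.Ioi (0:ℝ), deriv km r < 0) ∧
    ∀ jv jdv : ℝ, 0 < jdv / jv → jdv / jv ≠ deriv km R / km R := by
  have hm2 : (1:ℝ) ≤ (m:ℝ) ^ 2 := by
    have : (1:ℝ) ≤ |(m:ℝ)| := by exact_mod_cast hm
    calc (1:ℝ) = 1 ^ 2 := by ring
    _ ≤ |(m:ℝ)| ^ 2 := by
        exact pow_le_pow_left₀ (by norm_num) this 2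
    _ = (m:ℝ) ^ 2 := sq_abs _
  -- deriv km is strictly monotone on Ioi 0
  have hopen : IsOpen (Set.Ioi (0:ℝ)) := isOpen_Ioi
  have hcont : ContinuousOn (deriv km) (Set.Ioi 0) :=
    hks.continuousOn_deriv_of_isOpen hopen (by norm_num)
  have hpos : ∀ x ∈ interior (Set.Ioi (0:ℝ)), 0 < deriv (deriv km) x := by
    intro x hx
    rw [interior_eq_iff_isOpen.mpr hopen] at hx
    rw [hkode x hx]
    have hx0 : (0:ℝ) < x := hx
    have h1 : (0:ℝ) < ((m:ℝ) ^ 2 - 1/4) / x ^ 2 :=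
      div_pos (by linarith) (by positivity)
    exact mul_pos (by linarith [sub_nonneg.mpr hlam]) (hkpos x hx)
  have hmono : StrictMonoOn (deriv km) (Set.Ioi 0) :=
    strictMonoOn_of_deriv_pos (convex_Ioi 0) hcont hpos
  have hneg : ∀ r ∈ Set.Ioi (0:ℝ), deriv km r < 0 := by
    intro r hr
    obtain ⟨x, hx⟩ := (hk'.and (eventually_gt_atTop r)).exists
    have hx0 : x ∈ Set.Ioi (0:ℝ) := lt_trans hr hx.2
    exact lt_trans (hmono hr hx0 hx.2) hx.1
  refine ⟨hneg, fun jv jdv hpos' heq => ?_⟩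
  have : deriv km R / km R < 0 :=
    div_neg_of_neg_of_pos (hneg R hR) (hkpos R hR)
  linarith [heq ▸ hpos']
end

section
/- The total number of guided modes, i.e., the total number over all m ∈ ℤ of real λ ∈ (0, d²] for which either (λ < d² and j_m'(R,λ)/j_m(R,λ) = k_m'(R,λ)/k_m(R,λ)) or (λ = d² and j_m'(R,λ)/j_m(R,λ) = -(|m|-1/2)/R), is finite. -/
open Filter

/-- Theorem 8.3 of the paper: the total number of guided modes, over all `m ∈ ℤ`, is
finite. -/
theorem stmt18
    (q : ℝ → ℝ) (hqm : Measurable q) (hq0 : ∀ r, 0 ≤ q r)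
    (hqbdd : BddAbove (q '' Set.Ici 0))
    (d R : ℝ) (hd : 0 < d) (hR : 0 < R) (hqcl : ∀ r, R ≤ r → q r = d ^ 2)
    (j : ℤ → ℝ → ℝ → ℝ) (k : ℤ → ℝ → ℝ → ℝ)
    (hjs : ∀ (m : ℤ) (lam : ℝ), ContDiffOn ℝ 2 (fun s => j m s lam) (Set.Ioi 0))
    (hjode : ∀ (m : ℤ) (lam : ℝ), ∀ s ∈ Set.Ioi (0:ℝ),
      deriv (deriv (fun t => j m t lam)) s
        + (lam - q s - ((m:ℝ) ^ 2 - 1/4) / s ^ 2) * j m s lam = 0)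
    (hjn : ∀ (m : ℤ) (lam : ℝ),
      Tendsto (fun s : ℝ => j m s lam / s ^ ((|m| : ℝ) + 1/2))
        (nhdsWithin 0 (Set.Ioi 0)) (nhds 1))
    (hfin : ∀ m : ℤ,
      {lam : ℝ | lam ∈ Set.Ioc 0 (d ^ 2) ∧
        ((lam < d ^ 2 ∧ deriv (fun t => j m t lam) R / j m R lam
            = deriv (fun t => k m t lam) R / k m R lam) ∨
         (lam = d ^ 2 ∧ deriv (fun t => j m t lam) R / j m R lam
            = -((|m| : ℝ) - 1/2) / R))}.Finite)
    (hlarge : ∃ M : ℕ, ∀ m : ℤ, (M : ℤ) ≤ |m| → ∀ lam ∈ Set.Ioc (0:ℝ) (d ^ 2),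
      0 < j m R lam ∧ 0 < deriv (fun t => j m t lam) R)
    (hk' : ∀ m : ℤ, 1 ≤ |m| → ∀ lam ∈ Set.Ioc (0:ℝ) (d ^ 2), ∀ r ∈ Set.Ioi (0:ℝ),
      deriv (fun t => k m t lam) r < 0 ∧ 0 < k m r lam) :
    {p : ℤ × ℝ | p.2 ∈ Set.Ioc 0 (d ^ 2) ∧
      ((p.2 < d ^ 2 ∧ deriv (fun t => j p.1 t p.2) R / j p.1 R p.2
          = deriv (fun t => k p.1 t p.2) R / k p.1 R p.2) ∨
       (p.2 = d ^ 2 ∧ deriv (fun t => j p.1 t p.2) R / j p.1 R p.2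
          = -((|p.1| : ℝ) - 1/2) / R))}.Finite := by
  obtain ⟨M, hM⟩ := hlarge
  set N : ℤ := max (M : ℤ) 1 with hN
  apply Set.Finite.subset
    (Set.Finite.biUnion (Finset.Icc (-N) N).finite_toSet
      (fun m _ => ((Set.finite_singleton m).prod (hfin m))))
  rintro ⟨m, lam⟩ ⟨hmem, hcase⟩
  simp only [Set.mem_iUnion, Finset.mem_coe, Finset.mem_Icc, Set.mem_prod,
    Set.mem_singleton_iff]
  refine ⟨m, ?_, rfl, hmem, hcase⟩
  by_contra hcon
  have hNm : N ≤ |m| := by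
    rcases abs_cases m with ⟨h1, _⟩ | ⟨h1, _⟩ <;> omega
  have hM' : (M : ℤ) ≤ |m| := le_trans (le_max_left _ _) hNm
  have h1m : (1 : ℤ) ≤ |m| := le_trans (le_max_right _ _) hNm
  obtain ⟨hjpos, hj'pos⟩ := hM m hM' lam hmem
  have hlhs : 0 < deriv (fun t => j m t lam) R / j m R lam := div_pos hj'pos hjpos
  rcases hcase with ⟨hlt, heq⟩ | ⟨heq2, heq⟩
  · obtain ⟨hk'neg, hkpos⟩ := hk' m h1m lam hmem R (Set.mem_Ioi.mpr hR)
    have : deriv (fun t => k m t lam) R / k m R lam < 0 := div_neg_of_neg_of_pos hk'neg hkpos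
    linarith [heq ▸ hlhs]
  · have habs : (1 : ℝ) ≤ (|m| : ℝ) := by exact_mod_cast h1m
    have : -((|m| : ℝ) - 1/2) / R < 0 := by
      apply div_neg_of_neg_of_pos _ hR
      linarith
    linarith [heq ▸ hlhs]
end
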